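/- arXiv:2104.02250 — 5 statements merged into one kernel-verified Lean document; each statement's English description precedes it below -/
import Mathlib

section
/- The function φ attains a finite global minimum value α* on ℝ at a unique point η* ∈ ℝ; moreover φ is strictly decreasing on (−∞, η*] and strictly increasing on [η*, ∞). Consequently, for every α < α* the equation φ(η) = α has no solution η ∈ ℝ; for α = α* it has the unique solution η = η*; and for every α > α* it has exactly two solutions η₂(α) < η* < η₁(α). -/
set_option maxHeartbeats 4000000

open MeasureTheory Real

noncomputable section

/-- `φ(η) = (∫₀¹ e^{η z²} dz) / (∫₀¹ z² (1 − z²) e^{η z²} dz)`. -/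
noncomputable def phi (η : ℝ) : ℝ :=
  (∫ z in (0:ℝ)..1, Real.exp (η * z ^ 2)) /
    (∫ z in (0:ℝ)..1, z ^ 2 * (1 - z ^ 2) * Real.exp (η * z ^ 2))

open Set intervalIntegral Metric

/-- the basic parametric integral -/
noncomputable def Iw (g : ℝ → ℝ) (η : ℝ) : ℝ := ∫ z in (0:ℝ)..1, g z * Real.exp (η * z ^ 2)

lemma cont_integrand (g : ℝ → ℝ) (hg : Continuous g) (η : ℝ) :
    Continuous (fun z => g z * Real.exp (η * z ^ 2)) := by
  exact hg.mul ((Real.continuous_exp).comp (by continuity))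

lemma intv_integrable (g : ℝ → ℝ) (hg : Continuous g) (η : ℝ) (a b : ℝ) :
    IntervalIntegrable (fun z => g z * Real.exp (η * z ^ 2)) volume a b :=
  (cont_integrand g hg η).intervalIntegrable a b

lemma Iw_hasDerivAt (g : ℝ → ℝ) (hg : Continuous g) (η : ℝ) :
    HasDerivAt (Iw g) (Iw (fun z => g z * z ^ 2) η) η := by
  obtain ⟨C, hC⟩ : ∃ C, ∀ z ∈ Set.Icc (0:ℝ) 1, ‖g z‖ ≤ C :=
    (isCompact_Icc).exists_bound_of_continuousOn hg.continuousOn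
  have key := intervalIntegral.hasDerivAt_integral_of_dominated_loc_of_deriv_le
    (F := fun x z => g z * Real.exp (x * z ^ 2))
    (F' := fun x z => g z * z ^ 2 * Real.exp (x * z ^ 2))
    (x₀ := η) (a := (0:ℝ)) (b := 1) (μ := volume)
    (bound := fun _ => C * Real.exp (|η| + 1)) (s := Metric.ball η 1) (Metric.ball_mem_nhds η one_pos)
    (Filter.Eventually.of_forall fun x =>
      ((cont_integrand g hg x)).aestronglyMeasurable)
    (intv_integrable g hg η 0 1)
    ((cont_integrand (fun z => g z * z ^ 2) (by continuity) η).aestronglyMeasurable)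
    ?_ ?_ ?_
  · exact key.2
  · refine Filter.Eventually.of_forall fun z hz x hx => ?_
    have hz' : z ∈ Set.Icc (0:ℝ) 1 := by
      rw [Set.uIoc_of_le (by norm_num : (0:ℝ) ≤ 1)] at hz
      exact ⟨le_of_lt hz.1, hz.2⟩
    have hz0 : 0 ≤ z := hz'.1
    have hz1 : z ≤ 1 := hz'.2
    have hzsq : z ^ 2 ≤ 1 := by nlinarith
    have hzsq0 : 0 ≤ z ^ 2 := sq_nonneg z
    have hxb : |x| ≤ |η| + 1 := by
      have := mem_ball_iff_norm.mp hx
      have : |x - η| < 1 := this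
      calc |x| = |x - η + η| := by ring_nf
        _ ≤ |x - η| + |η| := abs_add_le _ _
        _ ≤ |η| + 1 := by linarith
    have hexp : Real.exp (x * z ^ 2) ≤ Real.exp (|η| + 1) := by
      apply Real.exp_le_exp.mpr
      calc x * z ^ 2 ≤ |x * z ^ 2| := le_abs_self _
        _ = |x| * z ^ 2 := by rw [abs_mul, abs_of_nonneg hzsq0]
        _ ≤ (|η| + 1) * 1 := by
            apply mul_le_mul hxb hzsq hzsq0 (by positivity)
        _ = |η| + 1 := mul_one _
    have hgC : ‖g z‖ ≤ C := hC z hz'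
    have hC0 : 0 ≤ C := le_trans (norm_nonneg _) (hC 0 (by norm_num))
    calc ‖g z * z ^ 2 * Real.exp (x * z ^ 2)‖
        = ‖g z‖ * z ^ 2 * Real.exp (x * z ^ 2) := by
          rw [norm_mul, norm_mul]
          simp [abs_of_nonneg hzsq0, Real.abs_exp, Real.norm_eq_abs]
      _ ≤ C * 1 * Real.exp (|η| + 1) := by
          apply mul_le_mul (mul_le_mul hgC hzsq hzsq0 hC0) hexp (Real.exp_nonneg _)
          positivity
      _ = C * Real.exp (|η| + 1) := by ring
  · exact intervalIntegrable_const
  · refine Filter.Eventually.of_forall fun z _ x _ => ?_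
    have h1 : HasDerivAt (fun x : ℝ => x * z ^ 2) (z ^ 2) x := by
      simpa using (hasDerivAt_id x).mul_const (z ^ 2)
    have h2 : HasDerivAt (fun x : ℝ => Real.exp (x * z ^ 2))
        (Real.exp (x * z ^ 2) * z ^ 2) x := (Real.hasDerivAt_exp _).comp x h1
    have := h2.const_mul (g z)
    refine this.congr_deriv ?_
    ring

lemma Iw_cont (g : ℝ → ℝ) (hg : Continuous g) : Continuous (Iw g) := by
  have : Differentiable ℝ (Iw g) := fun η => (Iw_hasDerivAt g hg η).differentiableAt
  exact this.continuous

lemma Iw_pos (g : ℝ → ℝ) (hg : Continuous g) (η : ℝ)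
    (h0 : ∀ z ∈ Set.Icc (0:ℝ) 1, 0 ≤ g z) (c : ℝ) (hc0 : 0 < c) (hc1 : c ≤ 1)
    (hpos : ∀ z ∈ Set.Ioo (0:ℝ) c, 0 < g z) : 0 < Iw g η := by
  have hsplit : Iw g η = (∫ z in (0:ℝ)..c, g z * Real.exp (η * z ^ 2))
      + ∫ z in c..(1:ℝ), g z * Real.exp (η * z ^ 2) := by
    rw [Iw, ← intervalIntegral.integral_add_adjacent_intervals
      (intv_integrable g hg η 0 c) (intv_integrable g hg η c 1)]
  have h1 : 0 < ∫ z in (0:ℝ)..c, g z * Real.exp (η * z ^ 2) := by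
    apply intervalIntegral.intervalIntegral_pos_of_pos_on (intv_integrable g hg η 0 c)
    · intro z hz
      have : 0 < g z := hpos z hz
      positivity
    · exact hc0
  have h2 : 0 ≤ ∫ z in c..(1:ℝ), g z * Real.exp (η * z ^ 2) := by
    apply intervalIntegral.integral_nonneg hc1
    intro z hz
    have : 0 ≤ g z := h0 z ⟨le_trans hc0.le hz.1, hz.2⟩
    positivity
  linarith [hsplit, h1, h2]

lemma Iw_sub_smul (g₁ g₂ : ℝ → ℝ) (hg₁ : Continuous g₁) (hg₂ : Continuous g₂) (c η : ℝ) :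
    Iw (fun z => g₁ z - c * g₂ z) η = Iw g₁ η - c * Iw g₂ η := by
  unfold Iw
  have h1 := intv_integrable g₁ hg₁ η 0 1
  have h2 := (intv_integrable g₂ hg₂ η 0 1).const_mul c
  have : (fun z => (g₁ z - c * g₂ z) * Real.exp (η * z ^ 2))
      = fun z => g₁ z * Real.exp (η * z ^ 2) - c * (g₂ z * Real.exp (η * z ^ 2)) := by
    funext z; ring
  rw [this, intervalIntegral.integral_sub h1 h2, intervalIntegral.integral_const_mul]

lemma Iw_congr (g₁ g₂ : ℝ → ℝ) (h : ∀ z, g₁ z = g₂ z) (η : ℝ) : Iw g₁ η = Iw g₂ η := by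
  unfold Iw; congr 1; funext z; rw [h z]

/-- numerator -/
noncomputable def NN : ℝ → ℝ := Iw (fun _ => 1)
/-- denominator -/
noncomputable def DD : ℝ → ℝ := Iw (fun z => z ^ 2 * (1 - z ^ 2))

lemma wcont : Continuous (fun z : ℝ => z ^ 2 * (1 - z ^ 2)) := by continuity

lemma phi_eq (η : ℝ) : phi η = NN η / DD η := by
  unfold phi NN DD Iw
  congr 1
  congr 1
  funext z
  rw [one_mul]

lemma DD_pos (η : ℝ) : 0 < DD η := by
  apply Iw_pos _ wcont η ?_ 1 one_pos le_rfl ?_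
  · intro z hz
    obtain ⟨h1, h2⟩ := hz
    have ha : (0:ℝ) ≤ z ^ 2 := sq_nonneg z
    have hb : z ^ 2 ≤ 1 := by nlinarith
    nlinarith
  · intro z hz
    obtain ⟨h1, h2⟩ := hz
    have ha : (0:ℝ) < z ^ 2 := by positivity
    have hb : z ^ 2 < 1 := by nlinarith
    nlinarith

lemma NN_pos (η : ℝ) : 0 < NN η := by
  apply Iw_pos _ continuous_const η (fun _ _ => zero_le_one) 1 one_pos le_rfl
  intro z _; exact one_pos

lemma phi_gt_four (η : ℝ) : 4 < phi η := by
  have h : 0 < NN η - 4 * DD η := by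
    have heq := Iw_sub_smul (fun _ => 1) (fun z => z ^ 2 * (1 - z ^ 2)) continuous_const wcont 4 η
    have : NN η - 4 * DD η = Iw (fun z => 1 - 4 * (z ^ 2 * (1 - z ^ 2))) η := by
      rw [heq]; rfl
    rw [this]
    have hcongr : Iw (fun z => 1 - 4 * (z ^ 2 * (1 - z ^ 2))) η
        = Iw (fun z => (1 - 2 * z ^ 2) ^ 2) η := by
      apply Iw_congr; intro z; ring
    rw [hcongr]
    apply Iw_pos _ (by continuity) η (fun z _ => sq_nonneg _) (Real.sqrt 2 / 2)
      (by positivity) ?_ ?_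
    · nlinarith [Real.sq_sqrt (by norm_num : (2:ℝ) ≥ 0 ), Real.sqrt_nonneg 2,
        Real.sqrt_lt_sqrt (by norm_num : (0:ℝ) ≤ 2) (by norm_num : (2:ℝ) < 4)]
    · intro z hz
      have h2 : z ^ 2 < 1 / 2 := by
        have := hz.2
        nlinarith [Real.sq_sqrt (by norm_num : (0:ℝ) ≤ 2), hz.1]
      nlinarith
  rw [phi_eq]
  rw [lt_div_iff₀ (DD_pos η)]
  linarith

lemma phi_cont : Continuous phi := by
  have : phi = fun η => NN η / DD η := funext phi_eq
  rw [this]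
  exact (Iw_cont _ continuous_const).div (Iw_cont _ wcont) (fun η => (DD_pos η).ne')

lemma phi_lt_iff (η c : ℝ) : c < phi η ↔ 0 < NN η - c * DD η := by
  rw [phi_eq, lt_div_iff₀ (DD_pos η)]
  constructor <;> intro h <;> linarith

lemma phi_eq_iff (η c : ℝ) : phi η = c ↔ NN η - c * DD η = 0 := by
  rw [phi_eq, div_eq_iff (DD_pos η).ne']
  constructor <;> intro h <;> linarith

lemma roots (c : ℝ) (hc : 4 < c) : ∃ a b : ℝ, 0 < a ∧ a < b ∧ b < 1 ∧
    ∀ z : ℝ, 1 - c * (z ^ 2 * (1 - z ^ 2)) = c * ((z ^ 2 - a ^ 2) * (z ^ 2 - b ^ 2)) := by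
  have hc0 : (0:ℝ) < c := by linarith
  have h4c : (0:ℝ) < 4 / c := by positivity
  have h4c1 : 4 / c < 1 := by rw [div_lt_one hc0]; linarith
  set s := Real.sqrt (1 - 4 / c) with hs
  have hs2 : s ^ 2 = 1 - 4 / c := Real.sq_sqrt (by linarith)
  have hs0 : 0 < s := Real.sqrt_pos.mpr (by linarith)
  have hs1 : s < 1 := by nlinarith
  refine ⟨Real.sqrt ((1 - s) / 2), Real.sqrt ((1 + s) / 2), ?_, ?_, ?_, ?_⟩
  · exact Real.sqrt_pos.mpr (by linarith)
  · exact Real.sqrt_lt_sqrt (by linarith) (by linarith)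
  · have h := Real.sqrt_lt_sqrt (by linarith : (0:ℝ) ≤ (1 + s)/2) (by linarith : (1 + s)/2 < 1)
    simpa using h
  · intro z
    have ha2 : Real.sqrt ((1 - s) / 2) ^ 2 = (1 - s) / 2 := Real.sq_sqrt (by linarith)
    have hb2 : Real.sqrt ((1 + s) / 2) ^ 2 = (1 + s) / 2 := Real.sq_sqrt (by linarith)
    rw [ha2, hb2]
    have hcc : c * (4 / c) = 4 := by field_simp
    nlinarith [hs2, hcc]

lemma NNDD_eq (c a b : ℝ)
    (hid : ∀ z : ℝ, 1 - c * (z ^ 2 * (1 - z ^ 2)) = c * ((z ^ 2 - a ^ 2) * (z ^ 2 - b ^ 2)))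
    (η : ℝ) : NN η - c * DD η = c * Iw (fun z => (z ^ 2 - a ^ 2) * (z ^ 2 - b ^ 2)) η := by
  have hPcont : Continuous (fun z : ℝ => (z ^ 2 - a ^ 2) * (z ^ 2 - b ^ 2)) := by continuity
  have h1 : NN η - c * DD η = Iw (fun z => 1 - c * (z ^ 2 * (1 - z ^ 2))) η := by
    rw [Iw_sub_smul (fun _ => 1) (fun z => z ^ 2 * (1 - z ^ 2)) continuous_const wcont c η]
    rfl
  have h2 : Iw (fun z => 1 - c * (z ^ 2 * (1 - z ^ 2))) η
      = Iw (fun z => c * ((z ^ 2 - a ^ 2) * (z ^ 2 - b ^ 2))) η :=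
    Iw_congr _ _ (fun z => by rw [hid z]) η
  have h3 : Iw (fun z => c * ((z ^ 2 - a ^ 2) * (z ^ 2 - b ^ 2))) η
      = c * Iw (fun z => (z ^ 2 - a ^ 2) * (z ^ 2 - b ^ 2)) η := by
    unfold Iw
    rw [← intervalIntegral.integral_const_mul]
    congr 1; funext z; ring
  rw [h1, h2, h3]

lemma key (η₁ η₂ η₃ : ℝ) (h12 : η₁ < η₂) (h23 : η₂ < η₃) :
    phi η₂ < phi η₁ ∨ phi η₂ < phi η₃ := by
  set c := phi η₂ with hc
  have hc4 : 4 < c := phi_gt_four η₂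
  obtain ⟨a, b, ha0, hab, hb1, hid⟩ := roots c hc4
  set P : ℝ → ℝ := fun z => (z ^ 2 - a ^ 2) * (z ^ 2 - b ^ 2) with hP
  have hPcont : Continuous P := by continuity
  set Q : ℝ → ℝ := fun z => P z * (z ^ 2 - b ^ 2) with hQ
  have hQcont : Continuous Q := by continuity
  set R : ℝ → ℝ := fun z => Q z * (z ^ 2 - a ^ 2) with hR
  have hRcont : Continuous R := by continuity
  -- J η₂ = 0
  have hNNDD : ∀ η, NN η - c * DD η = c * Iw P η := fun η => NNDD_eq c a b hid η
  have hJ2 : Iw P η₂ = 0 := by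
    have := (phi_eq_iff η₂ c).mp rfl
    have hcpos : (0:ℝ) < c := by linarith
    have := hNNDD η₂
    nlinarith [hNNDD η₂, (phi_eq_iff η₂ c).mp rfl]
  -- derivative identities
  have hG1deriv : ∀ η, HasDerivAt (fun η => Real.exp (-η * a ^ 2) * Iw Q η)
      (Real.exp (-η * a ^ 2) * Iw R η) η := by
    intro η
    have h1 : HasDerivAt (fun η : ℝ => Real.exp (-η * a ^ 2))
        (Real.exp (-η * a ^ 2) * (-(a ^ 2))) η := by
      have : HasDerivAt (fun η : ℝ => -η * a ^ 2) (-(a ^ 2)) η := by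
        simpa using ((hasDerivAt_id η).neg.mul_const (a ^ 2))
      exact (Real.hasDerivAt_exp _).comp η this
    have h2 := Iw_hasDerivAt Q hQcont η
    have := h1.mul h2
    refine this.congr_deriv ?_
    have hsub : Iw (fun z => Q z * z ^ 2) η - a ^ 2 * Iw Q η = Iw R η := by
      rw [← Iw_sub_smul (fun z => Q z * z ^ 2) Q (by continuity) hQcont (a ^ 2) η]
      exact Iw_congr _ _ (fun z => by simp only [hR]; ring) η
    rw [← hsub]
    ring
  have hG0deriv : ∀ η, HasDerivAt (fun η => Real.exp (-η * b ^ 2) * Iw P η)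
      (Real.exp (-η * b ^ 2) * Iw Q η) η := by
    intro η
    have h1 : HasDerivAt (fun η : ℝ => Real.exp (-η * b ^ 2))
        (Real.exp (-η * b ^ 2) * (-(b ^ 2))) η := by
      have : HasDerivAt (fun η : ℝ => -η * b ^ 2) (-(b ^ 2)) η := by
        simpa using ((hasDerivAt_id η).neg.mul_const (b ^ 2))
      exact (Real.hasDerivAt_exp _).comp η this
    have h2 := Iw_hasDerivAt P hPcont η
    have := h1.mul h2
    refine this.congr_deriv ?_
    have hsub : Iw (fun z => P z * z ^ 2) η - b ^ 2 * Iw P η = Iw Q η := by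
      rw [← Iw_sub_smul (fun z => P z * z ^ 2) P (by continuity) hPcont (b ^ 2) η]
      exact Iw_congr _ _ (fun z => by simp only [hQ]; ring) η
    rw [← hsub]
    ring
  -- R ≥ 0 and Iw R > 0
  have hIwR : ∀ η, 0 < Iw R η := by
    intro η
    apply Iw_pos R hRcont η ?_ a ha0 (by linarith) ?_
    · intro z _
      have : R z = ((z ^ 2 - a ^ 2) * (z ^ 2 - b ^ 2)) ^ 2 := by simp only [hR, hQ, hP]; ring
      rw [this]; exact sq_nonneg _
    · intro z hz
      have h1 : z ^ 2 < a ^ 2 := by nlinarith [hz.1, hz.2]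
      have h2 : z ^ 2 < b ^ 2 := by nlinarith
      have hprod : 0 < (z ^ 2 - a ^ 2) * (z ^ 2 - b ^ 2) :=
        mul_pos_of_neg_of_neg (by linarith) (by linarith)
      have : R z = ((z ^ 2 - a ^ 2) * (z ^ 2 - b ^ 2)) ^ 2 := by simp only [hR, hQ, hP]; ring
      rw [this]
      positivity
  -- G1 strictly monotone
  set G1 : ℝ → ℝ := fun η => Real.exp (-η * a ^ 2) * Iw Q η with hG1
  have hG1mono : StrictMono G1 := by
    apply strictMono_of_deriv_pos
    intro η
    rw [(hG1deriv η).deriv]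
    exact mul_pos (Real.exp_pos _) (hIwR η)
  set G0 : ℝ → ℝ := fun η => Real.exp (-η * b ^ 2) * Iw P η with hG0
  have hG0cont : Continuous G0 := by
    apply Continuous.mul
    · exact Real.continuous_exp.comp ((continuous_id.neg).mul continuous_const)
    · exact Iw_cont P hPcont
  have hG0diff : ∀ η, HasDerivAt G0 (Real.exp (-η * b ^ 2) * Iw Q η) η := hG0deriv
  have hG0η₂ : G0 η₂ = 0 := by simp only [hG0, hJ2, mul_zero]
  by_cases hsign : G1 η₂ ≤ 0
  · -- G0 strictly decreasing on [η₁, η₂]; G0 η₁ > 0 ⇒ phi η₁ > c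
    left
    have hanti : StrictAntiOn G0 (Set.Icc η₁ η₂) := by
      apply strictAntiOn_of_deriv_neg (convex_Icc η₁ η₂)
      · exact hG0cont.continuousOn
      · intro η hη
        rw [interior_Icc] at hη
        rw [(hG0deriv η).deriv]
        have hQneg : Iw Q η < 0 := by
          have h := hG1mono hη.2
          have hle : G1 η < 0 := lt_of_lt_of_le h hsign
          simp only [hG1] at hle
          nlinarith [Real.exp_pos (-η * a ^ 2)]
        nlinarith [Real.exp_pos (-η * b ^ 2)]
    have h01 : G0 η₁ > G0 η₂ := hanti (Set.left_mem_Icc.mpr h12.le)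
      (Set.right_mem_Icc.mpr h12.le) h12
    rw [hG0η₂] at h01
    have hJ1pos : 0 < Iw P η₁ := by
      simp only [hG0] at h01
      nlinarith [Real.exp_pos (-η₁ * b ^ 2)]
    rw [phi_lt_iff, hNNDD η₁]
    exact mul_pos (by linarith) hJ1pos
  · right
    push_neg at hsign
    have hmono : StrictMonoOn G0 (Set.Icc η₂ η₃) := by
      apply strictMonoOn_of_deriv_pos (convex_Icc η₂ η₃)
      · exact hG0cont.continuousOn
      · intro η hη
        rw [interior_Icc] at hη
        rw [(hG0deriv η).deriv]
        have hQpos : 0 < Iw Q η := by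
          have h := hG1mono hη.1
          have hgt : 0 < G1 η := lt_trans hsign h
          simp only [hG1] at hgt
          nlinarith [Real.exp_pos (-η * a ^ 2)]
        positivity
    have h23' : G0 η₂ < G0 η₃ := hmono (Set.left_mem_Icc.mpr h23.le)
      (Set.right_mem_Icc.mpr h23.le) h23
    rw [hG0η₂] at h23'
    have hJ3pos : 0 < Iw P η₃ := by
      simp only [hG0] at h23'
      nlinarith [Real.exp_pos (-η₃ * b ^ 2)]
    rw [phi_lt_iff, hNNDD η₃]
    exact mul_pos (by linarith) hJ3pos

lemma tails (c : ℝ) (hc : 4 < c) :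
    (∃ M : ℝ, ∀ η ≥ M, c < phi η) ∧ (∃ m : ℝ, ∀ η ≤ m, c < phi η) := by
  obtain ⟨a, b, ha0, hab, hb1, hid⟩ := roots c hc
  set P : ℝ → ℝ := fun z => (z ^ 2 - a ^ 2) * (z ^ 2 - b ^ 2) with hP
  have hPcont : Continuous P := by continuity
  have hcpos : (0:ℝ) < c := by linarith
  have hb0 : 0 < b := lt_trans ha0 hab
  have ha1 : a < 1 := lt_trans hab hb1
  have hab2 : a ^ 2 < b ^ 2 := by nlinarith
  have hb21 : b ^ 2 < 1 := by nlinarith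
  have ha20 : 0 < a ^ 2 := by positivity
  have hPlb : ∀ z ∈ Set.Icc (0:ℝ) 1, -1 ≤ P z := by
    intro z hz
    obtain ⟨hz0, hz1⟩ := hz
    have hd1 : 0 ≤ b ^ 2 - a ^ 2 := by linarith
    have hd2 : b ^ 2 - a ^ 2 ≤ 1 := by linarith
    have hd3 : (b ^ 2 - a ^ 2) * (1 - (b ^ 2 - a ^ 2)) ≥ 0 := mul_nonneg hd1 (by linarith)
    simp only [hP]
    nlinarith [sq_nonneg (z ^ 2 - (a ^ 2 + b ^ 2) / 2)]
  constructor
  · -- top tail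
    obtain ⟨t, ht2, htb, ht1⟩ : ∃ t : ℝ, t ^ 2 = (1 + b ^ 2) / 2 ∧ b < t ∧ t < 1 := by
      refine ⟨Real.sqrt ((1 + b ^ 2) / 2), Real.sq_sqrt (by positivity), ?_, ?_⟩
      · have h2 : Real.sqrt ((1 + b ^ 2) / 2) ^ 2 = (1 + b ^ 2) / 2 :=
          Real.sq_sqrt (by positivity)
        nlinarith [Real.sqrt_nonneg ((1 + b ^ 2) / 2)]
      · have h2 : Real.sqrt ((1 + b ^ 2) / 2) ^ 2 = (1 + b ^ 2) / 2 :=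
          Real.sq_sqrt (by positivity)
        nlinarith [Real.sqrt_nonneg ((1 + b ^ 2) / 2)]
    have ht0 : 0 < t := lt_trans hb0 htb
    obtain ⟨ε, hεpos, hε⟩ : ∃ ε : ℝ, 0 < ε ∧ ε = ((1 - b ^ 2) / 2) ^ 2 := by
      refine ⟨((1 - b ^ 2) / 2) ^ 2, ?_, rfl⟩
      have : 0 < (1 - b ^ 2) / 2 := by linarith
      positivity
    obtain ⟨K, hKpos, hK⟩ : ∃ K : ℝ, 0 < K ∧ K = ε * (1 - t) :=
      ⟨ε * (1 - t), mul_pos hεpos (by linarith), rfl⟩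
    obtain ⟨d, hdpos, hd⟩ : ∃ d : ℝ, 0 < d ∧ d = t ^ 2 - b ^ 2 :=
      ⟨t ^ 2 - b ^ 2, by nlinarith, rfl⟩
    refine ⟨max 0 (Real.log (1 / K) / d + 1), fun η hη => ?_⟩
    have hη0 : 0 ≤ η := le_trans (le_max_left _ _) hη
    have hηM : Real.log (1 / K) / d + 1 ≤ η := le_trans (le_max_right _ _) hη
    have hs1 := intervalIntegral.integral_add_adjacent_intervals
      (intv_integrable P hPcont η b t) (intv_integrable P hPcont η t 1)
    have hs2 := intervalIntegral.integral_add_adjacent_intervals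
      (intv_integrable P hPcont η 0 b)
      ((intv_integrable P hPcont η b t).trans (intv_integrable P hPcont η t 1))
    have hA1 : (∫ z in (0:ℝ)..b, P z * Real.exp (η * z ^ 2)) ≥ -Real.exp (η * b ^ 2) := by
      have hmono : (∫ z in (0:ℝ)..b, (fun _ : ℝ => -Real.exp (η * b ^ 2)) z)
          ≤ ∫ z in (0:ℝ)..b, P z * Real.exp (η * z ^ 2) := by
        apply intervalIntegral.integral_mono_on hb0.le
          intervalIntegrable_const (intv_integrable P hPcont η 0 b)
        intro z hz
        have hz2 : z ^ 2 ≤ b ^ 2 := by nlinarith [hz.1, hz.2]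
        have he : Real.exp (η * z ^ 2) ≤ Real.exp (η * b ^ 2) := by
          apply Real.exp_le_exp.mpr; nlinarith
        have hp : -1 ≤ P z := hPlb z ⟨hz.1, le_trans hz.2 (by linarith)⟩
        nlinarith [Real.exp_pos (η * z ^ 2)]
      rw [intervalIntegral.integral_const] at hmono
      simp only [smul_eq_mul, sub_zero] at hmono
      nlinarith [Real.exp_pos (η * b ^ 2)]
    have hA2 : (0:ℝ) ≤ ∫ z in b..t, P z * Real.exp (η * z ^ 2) := by
      apply intervalIntegral.integral_nonneg htb.le
      intro z hz
      have h1 : b ^ 2 ≤ z ^ 2 := by nlinarith [hz.1, hz.2]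
      have hPz : P z = (z ^ 2 - a ^ 2) * (z ^ 2 - b ^ 2) := rfl
      have hp : 0 ≤ P z := by rw [hPz]; exact mul_nonneg (by linarith) (by linarith)
      positivity
    have hA3 : K * Real.exp (η * t ^ 2) ≤ ∫ z in t..(1:ℝ), P z * Real.exp (η * z ^ 2) := by
      have hmono : (∫ z in t..(1:ℝ), (fun _ : ℝ => ε * Real.exp (η * t ^ 2)) z)
          ≤ ∫ z in t..(1:ℝ), P z * Real.exp (η * z ^ 2) := by
        apply intervalIntegral.integral_mono_on ht1.le
          intervalIntegrable_const (intv_integrable P hPcont η t 1)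
        intro z hz
        have hz2 : t ^ 2 ≤ z ^ 2 := by nlinarith [hz.1, hz.2]
        have h1 : (1 - b ^ 2) / 2 ≤ z ^ 2 - b ^ 2 := by nlinarith
        have h2 : (1 - b ^ 2) / 2 ≤ z ^ 2 - a ^ 2 := by nlinarith
        have hPz : P z = (z ^ 2 - a ^ 2) * (z ^ 2 - b ^ 2) := rfl
        have hp : ε ≤ P z := by
          rw [hε, hPz]
          have := mul_le_mul h2 h1 (by linarith) (by nlinarith)
          nlinarith
        have he : Real.exp (η * t ^ 2) ≤ Real.exp (η * z ^ 2) := by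
          apply Real.exp_le_exp.mpr; nlinarith
        nlinarith [Real.exp_pos (η * t ^ 2), Real.exp_pos (η * z ^ 2)]
      rw [intervalIntegral.integral_const] at hmono
      simp only [smul_eq_mul] at hmono
      calc K * Real.exp (η * t ^ 2) = (1 - t) * (ε * Real.exp (η * t ^ 2)) := by rw [hK]; ring
        _ ≤ _ := hmono
    have hexp : Real.exp (η * t ^ 2) = Real.exp (η * b ^ 2) * Real.exp (η * d) := by
      rw [← Real.exp_add]; congr 1; rw [hd]; ring
    have hKd : 1 < K * Real.exp (η * d) := by
      have h2' : Real.log (1 / K) / d * d = Real.log (1 / K) :=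
        div_mul_cancel₀ _ hdpos.ne'
      have h1 : Real.log (1 / K) < η * d := by nlinarith
      have h2 : 1 / K < Real.exp (η * d) := by
        calc 1 / K = Real.exp (Real.log (1 / K)) := (Real.exp_log (by positivity)).symm
          _ < Real.exp (η * d) := Real.exp_lt_exp.mpr h1
      have h3 : K * (1 / K) < K * Real.exp (η * d) := mul_lt_mul_of_pos_left h2 hKpos
      rw [mul_one_div_cancel hKpos.ne'] at h3
      exact h3
    have hJpos : 0 < Iw P η := by
      have hIwval : Iw P η = (∫ z in (0:ℝ)..b, P z * Real.exp (η * z ^ 2))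
          + ((∫ z in b..t, P z * Real.exp (η * z ^ 2))
          + (∫ z in t..(1:ℝ), P z * Real.exp (η * z ^ 2))) := by
        rw [Iw]; rw [← hs2, hs1]
      rw [hIwval]
      have hpos : 0 < -Real.exp (η * b ^ 2) + (0 + K * Real.exp (η * t ^ 2)) := by
        rw [hexp]
        nlinarith [Real.exp_pos (η * b ^ 2)]
      linarith [hA1, hA2, hA3]
    rw [phi_lt_iff, NNDD_eq c a b hid η]
    exact mul_pos hcpos hJpos
  · -- bottom tail
    obtain ⟨ε', hε'pos, hε'⟩ : ∃ e : ℝ, 0 < e ∧ e = (3 / 4 * a ^ 2) * (3 / 4 * b ^ 2) :=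
      ⟨(3 / 4 * a ^ 2) * (3 / 4 * b ^ 2), by apply mul_pos <;> nlinarith, rfl⟩
    obtain ⟨K', hK'pos, hK'⟩ : ∃ k : ℝ, 0 < k ∧ k = ε' * (a / 2) :=
      ⟨ε' * (a / 2), mul_pos hε'pos (by linarith), rfl⟩
    obtain ⟨d', hd'pos, hd'⟩ : ∃ d : ℝ, 0 < d ∧ d = 3 / 4 * a ^ 2 :=
      ⟨3 / 4 * a ^ 2, by nlinarith, rfl⟩
    refine ⟨min 0 (Real.log K' / d' - 1), fun η hη => ?_⟩
    have hη0 : η ≤ 0 := le_trans hη (min_le_left _ _)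
    have hηm : η ≤ Real.log K' / d' - 1 := le_trans hη (min_le_right _ _)
    have hs1 := intervalIntegral.integral_add_adjacent_intervals
      (intv_integrable P hPcont η (a/2) a) (intv_integrable P hPcont η a 1)
    have hs2 := intervalIntegral.integral_add_adjacent_intervals
      (intv_integrable P hPcont η 0 (a/2))
      ((intv_integrable P hPcont η (a/2) a).trans (intv_integrable P hPcont η a 1))
    have hB1 : K' * Real.exp (η * (a ^ 2 / 4)) ≤
        ∫ z in (0:ℝ)..(a/2), P z * Real.exp (η * z ^ 2) := by
      have hmono : (∫ z in (0:ℝ)..(a/2), (fun _ : ℝ => ε' * Real.exp (η * (a ^ 2 / 4))) z)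
          ≤ ∫ z in (0:ℝ)..(a/2), P z * Real.exp (η * z ^ 2) := by
        apply intervalIntegral.integral_mono_on (by positivity)
          intervalIntegrable_const (intv_integrable P hPcont η 0 (a/2))
        intro z hz
        have hz2 : z ^ 2 ≤ a ^ 2 / 4 := by nlinarith [hz.1, hz.2]
        have h1 : 3 / 4 * a ^ 2 ≤ a ^ 2 - z ^ 2 := by nlinarith
        have h2 : 3 / 4 * b ^ 2 ≤ b ^ 2 - z ^ 2 := by nlinarith
        have hPz : P z = (z ^ 2 - a ^ 2) * (z ^ 2 - b ^ 2) := rfl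
        have hp : ε' ≤ P z := by
          rw [hε', hPz]
          have := mul_le_mul h1 h2 (by nlinarith) (by nlinarith)
          nlinarith
        have he : Real.exp (η * (a ^ 2 / 4)) ≤ Real.exp (η * z ^ 2) := by
          apply Real.exp_le_exp.mpr; nlinarith
        nlinarith [Real.exp_pos (η * (a ^ 2 / 4)), Real.exp_pos (η * z ^ 2)]
      rw [intervalIntegral.integral_const] at hmono
      simp only [smul_eq_mul, sub_zero] at hmono
      calc K' * Real.exp (η * (a ^ 2 / 4)) = a / 2 * (ε' * Real.exp (η * (a ^ 2 / 4))) := by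
            rw [hK']; ring
        _ ≤ _ := hmono
    have hB2 : (0:ℝ) ≤ ∫ z in (a/2)..a, P z * Real.exp (η * z ^ 2) := by
      apply intervalIntegral.integral_nonneg (by linarith)
      intro z hz
      have h1 : z ^ 2 ≤ a ^ 2 := by nlinarith [hz.1, hz.2, ha0]
      have hPz : P z = (z ^ 2 - a ^ 2) * (z ^ 2 - b ^ 2) := rfl
      have hp : 0 ≤ P z := by
        rw [hPz]
        have := mul_nonneg (by linarith : (0:ℝ) ≤ a ^ 2 - z ^ 2)
          (by linarith : (0:ℝ) ≤ b ^ 2 - z ^ 2)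
        nlinarith
      positivity
    have hB3 : -Real.exp (η * a ^ 2) ≤ ∫ z in a..(1:ℝ), P z * Real.exp (η * z ^ 2) := by
      have hmono : (∫ z in a..(1:ℝ), (fun _ : ℝ => -Real.exp (η * a ^ 2)) z)
          ≤ ∫ z in a..(1:ℝ), P z * Real.exp (η * z ^ 2) := by
        apply intervalIntegral.integral_mono_on ha1.le
          intervalIntegrable_const (intv_integrable P hPcont η a 1)
        intro z hz
        have hz2 : a ^ 2 ≤ z ^ 2 := by nlinarith [hz.1, hz.2, ha0]
        have he : Real.exp (η * z ^ 2) ≤ Real.exp (η * a ^ 2) := by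
          apply Real.exp_le_exp.mpr; nlinarith
        have hp : -1 ≤ P z := hPlb z ⟨le_trans ha0.le hz.1, hz.2⟩
        nlinarith [Real.exp_pos (η * z ^ 2)]
      rw [intervalIntegral.integral_const] at hmono
      simp only [smul_eq_mul] at hmono
      nlinarith [Real.exp_pos (η * a ^ 2)]
    have hexp : Real.exp (η * a ^ 2) = Real.exp (η * (a ^ 2 / 4)) * Real.exp (η * d') := by
      rw [← Real.exp_add]; congr 1; rw [hd']; ring
    have hKd : Real.exp (η * d') < K' := by
      have h2' : Real.log K' / d' * d' = Real.log K' := div_mul_cancel₀ _ hd'pos.ne'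
      have h1 : η * d' < Real.log K' := by nlinarith
      calc Real.exp (η * d') < Real.exp (Real.log K') := Real.exp_lt_exp.mpr h1
        _ = K' := Real.exp_log hK'pos
    have hJpos : 0 < Iw P η := by
      have hIwval : Iw P η = (∫ z in (0:ℝ)..(a/2), P z * Real.exp (η * z ^ 2))
          + ((∫ z in (a/2)..a, P z * Real.exp (η * z ^ 2))
          + (∫ z in a..(1:ℝ), P z * Real.exp (η * z ^ 2))) := by
        rw [Iw]; rw [← hs2, hs1]
      rw [hIwval]
      have hpos : 0 < K' * Real.exp (η * (a ^ 2 / 4)) + (0 + -Real.exp (η * a ^ 2)) := by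
        rw [hexp]
        nlinarith [Real.exp_pos (η * (a ^ 2 / 4))]
      linarith [hB1, hB2, hB3]
    rw [phi_lt_iff, NNDD_eq c a b hid η]
    exact mul_pos hcpos hJpos

/-- `φ` attains a finite global minimum at a unique point `ηs`, is strictly decreasing on
`(−∞, ηs]` and strictly increasing on `[ηs, ∞)`; hence `φ η = α` has no solution for
`α < φ ηs`, only the solution `ηs` for `α = φ ηs`, and exactly two solutions
`η₂ < ηs < η₁` for `α > φ ηs`. -/
theorem stmt0 :
    ∃ ηs : ℝ,
      (∀ η : ℝ, η ≠ ηs → phi ηs < phi η) ∧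
      StrictAntiOn phi (Set.Iic ηs) ∧
      StrictMonoOn phi (Set.Ici ηs) ∧
      (∀ α : ℝ, α < phi ηs → ¬ ∃ η : ℝ, phi η = α) ∧
      (∀ η : ℝ, phi η = phi ηs → η = ηs) ∧
      (∀ α : ℝ, phi ηs < α →
        ∃ η₁ η₂ : ℝ, η₂ < ηs ∧ ηs < η₁ ∧ phi η₁ = α ∧ phi η₂ = α ∧
          ∀ η : ℝ, phi η = α → η = η₁ ∨ η = η₂) := by
  -- existence of a global minimizer
  obtain ⟨⟨M₀, hM₀⟩, ⟨m₀, hm₀⟩⟩ := tails (phi 0 + 1) (by linarith [phi_gt_four 0])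
  set A : ℝ := min m₀ (-1) with hA
  set B : ℝ := max M₀ 1 with hB
  have hAB : A ≤ B := le_trans (le_trans (min_le_right _ _) (by norm_num)) (le_max_right _ _)
  have h0AB : (0:ℝ) ∈ Set.Icc A B :=
    ⟨le_trans (min_le_right _ _) (by norm_num), le_trans (by norm_num) (le_max_right _ _)⟩
  obtain ⟨ηs, hηsK, hmin⟩ : ∃ x ∈ Set.Icc A B, ∀ y ∈ Set.Icc A B, phi x ≤ phi y := by
    obtain ⟨x, hx, hmin⟩ := isCompact_Icc.exists_isMinOn (Set.nonempty_Icc.mpr hAB)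
      phi_cont.continuousOn
    exact ⟨x, hx, fun y hy => hmin hy⟩
  have hglobal : ∀ η : ℝ, phi ηs ≤ phi η := by
    intro η
    by_cases hη : η ∈ Set.Icc A B
    · exact hmin η hη
    · have : phi 0 + 1 < phi η := by
        rcases not_and_or.mp (Set.mem_Icc.not.mp hη) with h | h
        · push_neg at h
          exact hm₀ η (le_trans h.le (le_trans (min_le_left _ _) le_rfl))
        · push_neg at h
          exact hM₀ η (le_trans (le_max_left _ _) h.le)
      calc phi ηs ≤ phi 0 := hmin 0 h0AB
        _ ≤ phi η := by linarith
  -- strict uniqueness of the minimum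
  have hstrict : ∀ η : ℝ, η ≠ ηs → phi ηs < phi η := by
    intro η hne
    rcases lt_or_gt_of_ne hne with h | h
    · -- η < ηs, take midpoint
      have hmid : η < (η + ηs) / 2 ∧ (η + ηs) / 2 < ηs := by constructor <;> linarith
      rcases key η ((η + ηs) / 2) ηs hmid.1 hmid.2 with hk | hk
      · -- phi mid < phi η; also phi ηs ≤ phi mid
        exact lt_of_le_of_lt (hglobal _) hk
      · exfalso; exact absurd hk (not_lt.mpr (hglobal _))
    · have hmid : ηs < (ηs + η) / 2 ∧ (ηs + η) / 2 < η := by constructor <;> linarith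
      rcases key ηs ((ηs + η) / 2) η hmid.1 hmid.2 with hk | hk
      · exfalso; exact absurd hk (not_lt.mpr (hglobal _))
      · exact lt_of_le_of_lt (hglobal _) hk
  have hanti : StrictAntiOn phi (Set.Iic ηs) := by
    intro x hx y hy hxy
    rcases eq_or_lt_of_le (Set.mem_Iic.mp hy) with h | h
    · subst h; exact hstrict x (ne_of_lt hxy)
    · rcases key x y ηs hxy h with hk | hk
      · exact hk
      · exact absurd hk (not_lt.mpr (hglobal _))
  have hmono : StrictMonoOn phi (Set.Ici ηs) := by
    intro x hx y hy hxy
    rcases eq_or_lt_of_le (Set.mem_Ici.mp hx) with h | h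
    · subst h; exact hstrict y (ne_of_gt hxy)
    · rcases key ηs x y h hxy with hk | hk
      · exact absurd hk (not_lt.mpr (hglobal _))
      · exact hk
  refine ⟨ηs, hstrict, hanti, hmono, ?_, ?_, ?_⟩
  · intro α hα ⟨η, hη⟩
    have := hglobal η
    linarith [hη ▸ this]
  · intro η hη
    by_contra hne
    exact absurd hη (ne_of_gt (hstrict η hne))
  · intro α hα
    have hα4 : 4 < α := lt_trans (phi_gt_four ηs) hα
    obtain ⟨⟨M, hM⟩, ⟨m, hm⟩⟩ := tails α hα4
    -- right solution
    set X : ℝ := max M (ηs + 1) with hX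
    have hXs : ηs ≤ X := le_trans (by linarith) (le_max_right _ _)
    have hφX : α < phi X := hM X (le_max_left _ _)
    have hsub : Set.Icc (phi ηs) (phi X) ⊆ phi '' Set.Icc ηs X :=
      intermediate_value_Icc hXs phi_cont.continuousOn
    obtain ⟨η₁, hη₁mem, hη₁⟩ := hsub ⟨le_of_lt hα, le_of_lt hφX⟩
    have hη₁s : ηs < η₁ := by
      rcases eq_or_lt_of_le hη₁mem.1 with h | h
      · exfalso; rw [← h] at hη₁; linarith
      · exact h
    -- left solution
    set Y : ℝ := min m (ηs - 1) with hY
    have hYs : Y ≤ ηs := le_trans (min_le_right _ _) (by linarith)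
    have hφY : α < phi Y := hm Y (min_le_left _ _)
    have hsub' : Set.Icc (phi ηs) (phi Y) ⊆ phi '' Set.Icc Y ηs :=
      intermediate_value_Icc' hYs phi_cont.continuousOn
    obtain ⟨η₂, hη₂mem, hη₂⟩ := hsub' ⟨le_of_lt hα, le_of_lt hφY⟩
    have hη₂s : η₂ < ηs := by
      rcases eq_or_lt_of_le hη₂mem.2 with h | h
      · exfalso; rw [h] at hη₂; linarith
      · exact h
    refine ⟨η₁, η₂, hη₂s, hη₁s, hη₁, hη₂, ?_⟩
    intro η hη
    have hηne : η ≠ ηs := by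
      intro h; rw [h] at hη; linarith
    rcases lt_or_gt_of_ne hηne with h | h
    · right
      by_contra hne
      rcases lt_or_gt_of_ne hne with hlt | hgt
      · have := hanti (Set.mem_Iic.mpr (le_of_lt (lt_trans hlt hη₂s)))
          (Set.mem_Iic.mpr hη₂s.le) hlt
        rw [hη, hη₂] at this; exact lt_irrefl α this
      · have := hanti (Set.mem_Iic.mpr hη₂s.le) (Set.mem_Iic.mpr h.le) hgt
        rw [hη, hη₂] at this; exact lt_irrefl α this
    · left
      by_contra hne
      rcases lt_or_gt_of_ne hne with hlt | hgt
      · have := hmono (Set.mem_Ici.mpr h.le) (Set.mem_Ici.mpr hη₁s.le) hlt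
        rw [hη, hη₁] at this; exact lt_irrefl α this
      · have := hmono (Set.mem_Ici.mpr hη₁s.le)
          (Set.mem_Ici.mpr (le_of_lt (lt_trans hη₁s hgt))) hgt
        rw [hη, hη₁] at this; exact lt_irrefl α this
end
end

section
/- Let Q be a real symmetric traceless 3×3 matrix. Then Q satisfies the stationarity equation aQ − b(Q² − (tr(Q²)/3) I) + c tr(Q²) Q = 0 if and only if Q = s (n nᵀ − I/3) for some unit vector n ∈ ℝ³ and some s ∈ ℝ with either s = 0, or b² − 24ac ≥ 0 and s ∈ {s₊, s₋}. (Here the stationarity equation is the Euler–Lagrange equation of F_b within 𝒬.) -/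
open Real

noncomputable section

abbrev Mat3 : Type := Matrix (Fin 3) (Fin 3) ℝ

/-- The space 𝒬 of real symmetric traceless 3×3 matrices. -/
def QSet : Set Mat3 := {Q | Q.IsSymm ∧ Q.trace = 0}

/-- The Landau–de Gennes bulk energy
`F_b(Q) = (a/2) tr(Q²) − (b/3) tr(Q³) + (c/4) (tr(Q²))²`. -/
noncomputable def Fb (a b c : ℝ) (Q : Mat3) : ℝ :=
  a / 2 * (Q * Q).trace - b / 3 * (Q * Q * Q).trace + c / 4 * ((Q * Q).trace) ^ 2

/-- The uniaxial tensor `s (n nᵀ − I/3)`. -/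
noncomputable def uniQ (s : ℝ) (n : Fin 3 → ℝ) : Mat3 :=
  s • (Matrix.vecMulVec n n - (1 / 3 : ℝ) • (1 : Mat3))

/-- `s₊ = (b + √(b² − 24ac))/(4c)`. -/
noncomputable def splus (a b c : ℝ) : ℝ := (b + Real.sqrt (b ^ 2 - 24 * a * c)) / (4 * c)

/-- `s₋ = (b − √(b² − 24ac))/(4c)`. -/
noncomputable def sminus (a b c : ℝ) : ℝ := (b - Real.sqrt (b ^ 2 - 24 * a * c)) / (4 * c)

/-! ### Auxiliary lemmas -/

lemma traceMulSelf (M : Mat3) (h : M.IsSymm) : (M * M).trace = ∑ i, ∑ j, (M i j)^2 := by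
  simp only [Matrix.trace, Matrix.diag, Matrix.mul_apply]
  refine Finset.sum_congr rfl fun i _ => Finset.sum_congr rfl fun j _ => ?_
  rw [← h.apply i j, sq]

lemma eqZeroOfTraceSq (M : Mat3) (h : M.IsSymm) (h0 : (M*M).trace = 0) : M = 0 := by
  rw [traceMulSelf M h] at h0
  ext i j
  have h1 := Finset.sum_eq_zero_iff_of_nonneg (fun i _ => Finset.sum_nonneg
    (fun j _ => sq_nonneg (M i j))) |>.mp h0 i (Finset.mem_univ i)
  have h2 := Finset.sum_eq_zero_iff_of_nonneg (fun j _ => sq_nonneg (M i j)) |>.mp h1 j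
    (Finset.mem_univ j)
  simpa using pow_eq_zero_iff (n := 2) (by norm_num) |>.mp h2

lemma cayley3 (P : Mat3) :
    (2:ℝ) • (P*P*P) - (2 * P.trace) • (P*P) + (P.trace^2 - (P*P).trace) • P
      - (2 * P.det) • (1 : Mat3) = 0 := by
  have htr : P.trace = P 0 0 + P 1 1 + P 2 2 := by
    simp [Matrix.trace, Matrix.diag, Fin.sum_univ_three]
  have hdet := Matrix.det_fin_three P
  ext i j
  fin_cases i <;> fin_cases j <;>
    simp [Matrix.mul_apply, Fin.sum_univ_three, htr, hdet, Matrix.one_apply,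
      Matrix.trace, Matrix.diag] <;> ring

lemma projOne (P : Mat3) (hs : P.IsSymm) (h2 : P * P = P) (ht : P.trace = 1) :
    ∃ n : Fin 3 → ℝ, (∑ i, (n i)^2 = 1) ∧ P = Matrix.vecMulVec n n := by
  have hdiag : ∀ i, P i i = ∑ k, (P i k)^2 := by
    intro i
    conv_lhs => rw [← h2]
    simp only [Matrix.mul_apply]
    exact Finset.sum_congr rfl fun k _ => by rw [← hs.apply i k, sq]
  obtain ⟨j, hj⟩ : ∃ j, 0 < P j j := by
    by_contra hcon
    push_neg at hcon
    have h3 : P.trace ≤ 0 := by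
      simp only [Matrix.trace, Matrix.diag]
      exact Finset.sum_nonpos fun i _ => hcon i
    rw [ht] at h3; linarith
  set α := P j j with hα
  set v : Fin 3 → ℝ := fun i => P i j with hv
  have hS3 : ∑ i, (v i)^2 = α := by
    rw [hα, hdiag j]
    exact Finset.sum_congr rfl fun k _ => by rw [hv]; simp only; rw [hs.apply j k]
  have hPv : ∀ i, ∑ k, P i k * v k = v i := by
    intro i
    have := congrArg (fun X => X i j) h2
    simpa [Matrix.mul_apply] using this
  have hS2 : ∑ i, ∑ k, P i k * v i * v k = α := by
    have h4 : ∀ i, ∑ k, P i k * v i * v k = v i * v i := by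
      intro i
      rw [← hPv i, Finset.mul_sum]
      exact Finset.sum_congr rfl fun k _ => by ring
    rw [Finset.sum_congr rfl fun i _ => h4 i]
    rw [show ∑ i, v i * v i = ∑ i, (v i)^2 from Finset.sum_congr rfl fun i _ => by ring, hS3]
  have hS1 : ∑ i, ∑ k, (P i k)^2 = 1 := by
    rw [← ht]
    simp only [Matrix.trace, Matrix.diag]
    exact (Finset.sum_congr rfl fun i _ => (hdiag i).symm)
  have hS3' : (∑ i, (v i)^2)^2 = α^2 := by rw [hS3]
  have hkey : ∑ i, ∑ k, (α * P i k - v i * v k)^2 = 0 := by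
    simp only [Fin.sum_univ_three] at hS1 hS2 hS3' ⊢
    linear_combination α^2 * hS1 - 2*α*hS2 + hS3'
  have hPk : ∀ i k, α * P i k = v i * v k := by
    intro i k
    have h1 := Finset.sum_eq_zero_iff_of_nonneg (fun i _ => Finset.sum_nonneg
      (fun k _ => sq_nonneg _)) |>.mp hkey i (Finset.mem_univ i)
    have h2' := Finset.sum_eq_zero_iff_of_nonneg (fun k _ => sq_nonneg _) |>.mp h1 k
      (Finset.mem_univ k)
    have := pow_eq_zero_iff (n := 2) (by norm_num) |>.mp h2'
    linarith
  refine ⟨fun i => v i / Real.sqrt α, ?_, ?_⟩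
  · have hsq : Real.sqrt α * Real.sqrt α = α := Real.mul_self_sqrt hj.le
    have h5 : ∀ i, (v i / Real.sqrt α)^2 = (v i)^2 / α := by
      intro i; rw [div_pow, sq (Real.sqrt α), hsq]
    rw [Finset.sum_congr rfl fun i _ => h5 i, ← Finset.sum_div, hS3]
    exact div_self hj.ne'
  · ext i k
    rw [Matrix.vecMulVec_apply]
    have hsq : Real.sqrt α * Real.sqrt α = α := Real.mul_self_sqrt hj.le
    rw [div_mul_div_comm, hsq]
    rw [← hPk i k]; field_simp

/-- From the quadratic relation for `s`, deduce membership in `{s₊, s₋}`. -/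
lemma scond (a b c s : ℝ) (hc : 0 < c) (hk : 2*c*s^2 - b*s + 3*a = 0) :
    0 ≤ b ^ 2 - 24 * a * c ∧ (s = splus a b c ∨ s = sminus a b c) := by
  have hdisc : b^2 - 24*a*c = (b - 4*c*s)^2 := by linear_combination (-8*c)*hk
  have hnn : (0:ℝ) ≤ b^2 - 24*a*c := by rw [hdisc]; positivity
  refine ⟨hnn, ?_⟩
  have hsqrt : Real.sqrt (b^2 - 24*a*c) = |b - 4*c*s| := by
    rw [hdisc, Real.sqrt_sq_eq_abs]
  rcases le_or_gt 0 (b - 4*c*s) with h | h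
  · right
    rw [sminus, hsqrt, abs_of_nonneg h]
    field_simp
    ring
  · left
    rw [splus, hsqrt, abs_of_neg h]
    field_simp
    ring

/-- Reverse: if `s ∈ {s₊, s₋}` and the discriminant is nonneg, `s` satisfies the quadratic. -/
lemma scondRev (a b c s : ℝ) (hc : 0 < c) (hnn : 0 ≤ b ^ 2 - 24 * a * c)
    (hs : s = splus a b c ∨ s = sminus a b c) : 2*c*s^2 - b*s + 3*a = 0 := by
  have he : (Real.sqrt (b^2 - 24*a*c))^2 = b^2 - 24*a*c := Real.sq_sqrt hnn
  rcases hs with rfl | rfl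
  · rw [splus]
    field_simp
    ring_nf at he ⊢
    linear_combination 2 * he
  · rw [sminus]
    field_simp
    ring_nf at he ⊢
    linear_combination 2 * he

/-- A symmetric traceless `Q` satisfies the stationarity equation
`aQ − b(Q² − (tr Q²/3) I) + c (tr Q²) Q = 0` iff `Q = s (n nᵀ − I/3)` for some unit
vector `n` and some `s` with `s = 0`, or `b² − 24ac ≥ 0` and `s ∈ {s₊, s₋}`. -/
theorem stmt7 (a b c : ℝ) (hb : 0 < b) (hc : 0 < c)
    (Q : Mat3) (hQ : Q.IsSymm) (htr : Q.trace = 0) :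
    (a • Q - b • (Q * Q - ((Q * Q).trace / 3) • (1 : Mat3)) + (c * (Q * Q).trace) • Q = 0)
    ↔
    ∃ (s : ℝ) (n : Fin 3 → ℝ), (∑ i, (n i) ^ 2 = 1) ∧ Q = uniQ s n ∧
      (s = 0 ∨ (0 ≤ b ^ 2 - 24 * a * c ∧ (s = splus a b c ∨ s = sminus a b c))) := by
  constructor
  · intro h
    set r := (Q * Q).trace with hrdef
    have hrexp : r = ∑ i, ∑ j, (Q i j)^2 := traceMulSelf Q hQ
    have hrnn : 0 ≤ r := by
      rw [hrexp]
      exact Finset.sum_nonneg fun i _ => Finset.sum_nonneg fun j _ => sq_nonneg _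
    rcases eq_or_lt_of_le hrnn with hr0 | hrpos
    · -- r = 0 ⇒ Q = 0
      have hQ0 : Q = 0 := eqZeroOfTraceSq Q hQ hr0.symm
      refine ⟨0, fun i => if i = 0 then 1 else 0, by simp, ?_, Or.inl rfl⟩
      rw [hQ0, uniQ, zero_smul]
    · -- r > 0
      have hb' : b ≠ 0 := hb.ne'
      set α := (a + c * r) / b with hαdef
      have h1 : b • (Q * Q) = (a + c * r) • Q + (b * r / 3) • (1 : Mat3) := by
        have key : b • (Q*Q) - ((a + c*r) • Q + (b*r/3) • (1:Mat3))
            = -(a • Q - b • (Q * Q - (r/3) • (1:Mat3)) + (c * r) • Q) := by module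
        rw [h] at key
        rw [neg_zero] at key
        exact sub_eq_zero.mp key
      have h2 : Q * Q = α • Q + (r/3) • (1 : Mat3) := by
        apply smul_right_injective Mat3 hb'
        show b • (Q * Q) = b • (α • Q + (r/3) • (1 : Mat3))
        rw [h1, hαdef]
        match_scalars <;> field_simp <;> try ring
      set d := Real.sqrt (α^2 + 4*r/3) with hddef
      have hd2 : d^2 = α^2 + 4*r/3 := Real.sq_sqrt (by positivity)
      have hdpos : 0 < d := Real.sqrt_pos.mpr (by positivity)
      have hd' : d ≠ 0 := hdpos.ne'
      set μ := (α - d)/2 with hμdef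
      set P := d⁻¹ • (Q - μ • (1 : Mat3)) with hPdef
      have hPsymm : P.IsSymm := by
        simp [hPdef, Matrix.IsSymm, Matrix.transpose_smul, Matrix.transpose_sub, hQ.eq]
      have hQP : Q = d • P + μ • (1 : Mat3) := by
        rw [hPdef]
        match_scalars <;> field_simp <;> try ring
      have hP2 : P * P = P := by
        have hMM : (Q - μ • (1:Mat3)) * (Q - μ • (1:Mat3)) = d • (Q - μ • (1:Mat3)) := by
          have expand : (Q - μ • (1:Mat3)) * (Q - μ • (1:Mat3))
              = Q*Q - (2*μ) • Q + (μ^2) • (1:Mat3) := by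
            simp only [sub_mul, mul_sub, Matrix.smul_mul, Matrix.mul_smul, one_mul, mul_one,
              smul_smul]
            module
          rw [expand, h2]
          match_scalars
          · rw [hμdef]; ring
          · rw [hμdef]; linear_combination (-1/4 : ℝ) * hd2
        rw [hPdef, Matrix.smul_mul, Matrix.mul_smul, hMM, smul_smul, smul_smul]
        congr 1
        field_simp
      have htP : P.trace = -(3*μ)/d := by
        rw [hPdef]
        simp [Matrix.trace_smul, Matrix.trace_sub, htr]
        ring
      -- det P ∈ {0, 1}
      have hdet : P.det = 0 ∨ P.det = 1 := by
        have hdd : P.det * P.det = P.det := by rw [← Matrix.det_mul, hP2]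
        rcases mul_eq_zero.mp (show P.det * (P.det - 1) = 0 by linear_combination hdd) with h' | h'
        · exact Or.inl h'
        · exact Or.inr (by linarith)
      rcases hdet with hdet0 | hdet1
      · -- det P = 0 : Cayley-Hamilton gives (t-1)(t-2) • P = 0
        have hch := cayley3 P
        rw [hP2, hP2, hdet0] at hch
        have hch' : (P.trace^2 - 3*P.trace + 2) • P = 0 := by
          rw [← hch]
          module
        rcases smul_eq_zero.mp hch' with hcoef | hP0
        · -- t = 1 or t = 2
          have hfac : (P.trace - 1) * (P.trace - 2) = 0 := by linear_combination hcoef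
          rcases mul_eq_zero.mp hfac with ht1 | ht2
          · -- trace P = 1 : uniaxial with s = d
            have ht1' : P.trace = 1 := by linarith
            have hμval : μ = -d/3 := by
              rw [htP] at ht1'
              field_simp at ht1'
              linarith
            obtain ⟨n, hn1, hPn⟩ := projOne P hPsymm hP2 ht1'
            have hα3 : α = d/3 := by rw [hμdef] at hμval; linarith
            have hr : r = 2*d^2/3 := by
              rw [hα3] at hd2
              linear_combination (-3/4 : ℝ) * hd2
            have hkey : 2*c*d^2 - b*d + 3*a = 0 := by
              have hαb : α * b = a + c * r := by rw [hαdef]; field_simp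
              rw [hα3, hr] at hαb
              linear_combination (-3 : ℝ) * hαb
            refine ⟨d, n, hn1, ?_, Or.inr (scond a b c d hc hkey)⟩
            rw [hQP, hPn, hμval, uniQ]
            module
          · -- trace P = 2 : uniaxial with s = -d
            have ht2' : P.trace = 2 := by linarith
            have hμval : μ = -(2*d)/3 := by
              rw [htP] at ht2'
              field_simp at ht2'
              linarith
            have hP'symm : (1 - P).IsSymm := by
              simp [Matrix.IsSymm, Matrix.transpose_sub, hPsymm.eq]
            have hP'2 : (1 - P) * (1 - P) = 1 - P := by
              simp only [sub_mul, mul_sub, one_mul, mul_one, hP2]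
              abel
            have hP't : (1 - P).trace = 1 := by
              rw [Matrix.trace_sub, ht2', Matrix.trace_one]
              norm_num
            obtain ⟨n, hn1, hPn⟩ := projOne (1 - P) hP'symm hP'2 hP't
            have hα3 : α = -d/3 := by rw [hμdef] at hμval; linarith
            have hr : r = 2*d^2/3 := by
              rw [hα3] at hd2
              linear_combination (-3/4 : ℝ) * hd2
            have hkey : 2*c*(-d)^2 - b*(-d) + 3*a = 0 := by
              have hαb : α * b = a + c * r := by rw [hαdef]; field_simp
              rw [hα3, hr] at hαb
              linear_combination (-3 : ℝ) * hαb
            refine ⟨-d, n, hn1, ?_, Or.inr (scond a b c (-d) hc hkey)⟩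
            have hPeq : P = 1 - Matrix.vecMulVec n n := by
              rw [← hPn]; abel
            rw [hQP, hPeq, hμval, uniQ]
            module
        · -- P = 0 ⇒ Q = μ • 1 ⇒ Q = 0, contradiction with r > 0
          exfalso
          rw [hP0, smul_zero, zero_add] at hQP
          have h0 : μ * 3 = 0 := by
            have h3 := congrArg Matrix.trace hQP
            rw [htr, Matrix.trace_smul, Matrix.trace_one] at h3
            simpa using h3.symm
          have hQ0 : Q = 0 := by rw [hQP, show μ = 0 by linarith, zero_smul]
          rw [hQ0] at hrdef
          simp at hrdef
          rw [hrdef] at hrpos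
          exact lt_irrefl 0 hrpos
      · -- det P = 1 : P = 1 ⇒ Q scalar ⇒ Q = 0, contradiction
        exfalso
        have hPu : IsUnit P.det := by rw [hdet1]; exact isUnit_one
        have hP1 : P = 1 := by
          have := congrArg (P⁻¹ * ·) hP2
          simpa [← mul_assoc, Matrix.nonsing_inv_mul _ hPu] using this
        rw [hP1] at hQP
        have hQs : Q = (d + μ) • (1 : Mat3) := by rw [hQP]; module
        have h0 : (d + μ) * 3 = 0 := by
          have h3 := congrArg Matrix.trace hQs
          rw [htr, Matrix.trace_smul, Matrix.trace_one] at h3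
          simpa using h3.symm
        have hQ0 : Q = 0 := by rw [hQs, show d + μ = 0 by linarith, zero_smul]
        rw [hQ0] at hrdef
        simp at hrdef
        rw [hrdef] at hrpos
        exact lt_irrefl 0 hrpos
  · -- backward direction
    rintro ⟨s, n, hn1, rfl, hs⟩
    set P := Matrix.vecMulVec n n with hPdef
    have hP2 : P * P = P := by
      ext i j
      simp only [hPdef, Matrix.mul_apply, Matrix.vecMulVec_apply]
      have : ∑ k, (n i * n k) * (n k * n j) = (∑ k, (n k)^2) * (n i * n j) := by
        rw [Finset.sum_mul]
        exact Finset.sum_congr rfl fun k _ => by ring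
      rw [this, hn1, one_mul]
    have htrP : P.trace = 1 := by
      rw [hPdef]
      simp only [Matrix.trace, Matrix.diag, Matrix.vecMulVec_apply]
      rw [show ∑ i, n i * n i = ∑ i, (n i)^2 from Finset.sum_congr rfl fun i _ => by ring, hn1]
    have hQQ : uniQ s n * uniQ s n = (s^2/3) • P + (s^2/9) • (1 : Mat3) := by
      rw [uniQ, ← hPdef]
      simp only [Matrix.smul_mul, Matrix.mul_smul, sub_mul, mul_sub, one_mul, mul_one,
        smul_smul, hP2]
      module
    have htrQQ : (uniQ s n * uniQ s n).trace = 2*s^2/3 := by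
      rw [hQQ]
      simp [Matrix.trace_smul, htrP]
      ring
    rw [htrQQ]
    have hcomb : a • uniQ s n - b • (uniQ s n * uniQ s n - (2*s^2/3/3) • (1:Mat3))
        + (c * (2*s^2/3)) • uniQ s n
        = (a - b*s/3 + 2*c*s^2/3) • uniQ s n := by
      rw [hQQ, uniQ, ← hPdef]
      module
    rw [hcomb]
    rcases hs with rfl | ⟨hnn, hsv⟩
    · rw [uniQ, zero_smul, smul_zero]
    · have hk := scondRev a b c s hc hnn hsv
      have : a - b*s/3 + 2*c*s^2/3 = 0 := by linarith
      rw [this, zero_smul]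
end
end

section
/- Assume a < 0 (so that b² − 24ac > 0 and s₊ > 0). Then: (i) for every Q ∈ 𝒬, F_b(Q) ≥ F_b(s₊ (n nᵀ − I/3)) (this value being independent of the unit vector n), with equality if and only if Q = s₊ (n nᵀ − I/3) for some unit vector n ∈ ℝ³; (ii) Q = 0 is not a local minimizer of F_b on 𝒬; (iii) for any unit vector n, s₋ (n nᵀ − I/3) is not a local minimizer of F_b on 𝒬. -/
open Real

noncomputable section

/-! ### Auxiliary scalar lemmas -/

/-- uniaxial energy -/
noncomputable def fE (a b c s : ℝ) : ℝ := a*s^2/3 - 2*b*s^3/27 + c*s^4/9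

lemma sqrt_gt {a b c : ℝ} (ha : a < 0) (hb : 0 < b) (hc : 0 < c) :
    b < Real.sqrt (b^2 - 24*a*c) := by
  have h : b = Real.sqrt (b^2) := (Real.sqrt_sq hb.le).symm
  nlinarith [Real.sqrt_lt_sqrt (by positivity : (0:ℝ) ≤ b^2)
    (by nlinarith : b^2 < b^2 - 24*a*c), h]

lemma sq_sqrt' {a b c : ℝ} (ha : a < 0) (hc : 0 < c) :
    (Real.sqrt (b^2 - 24*a*c))^2 = b^2 - 24*a*c := by
  rw [Real.sq_sqrt]; nlinarith [sq_nonneg b]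

lemma splus_pos {a b c : ℝ} (ha : a < 0) (hb : 0 < b) (hc : 0 < c) : 0 < splus a b c := by
  have := sqrt_gt ha hb hc
  unfold splus; positivity

lemma sminus_neg {a b c : ℝ} (ha : a < 0) (hb : 0 < b) (hc : 0 < c) : sminus a b c < 0 := by
  have := sqrt_gt ha hb hc
  unfold sminus
  apply div_neg_of_neg_of_pos
  · linarith
  · positivity

lemma splus_quad {a b c : ℝ} (ha : a < 0) (hb : 0 < b) (hc : 0 < c) :
    2*c*(splus a b c)^2 - b*(splus a b c) + 3*a = 0 := by
  have h := sq_sqrt' (b := b) ha hc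
  unfold splus
  generalize Real.sqrt (b^2 - 24*a*c) = r at h ⊢
  field_simp
  nlinarith [h]

lemma sminus_quad {a b c : ℝ} (ha : a < 0) (hb : 0 < b) (hc : 0 < c) :
    2*c*(sminus a b c)^2 - b*(sminus a b c) + 3*a = 0 := by
  have h := sq_sqrt' (b := b) ha hc
  unfold sminus
  generalize Real.sqrt (b^2 - 24*a*c) = r at h ⊢
  field_simp
  nlinarith [h]

lemma threecS {a b c : ℝ} (ha : a < 0) (hb : 0 < b) (hc : 0 < c) : b < 3*c*(splus a b c) := by
  have h := sqrt_gt ha hb hc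
  have h2 : 3*c*(splus a b c) = (3*(b + Real.sqrt (b^2-24*a*c)))/4 := by
    unfold splus; field_simp
  rw [h2]; linarith

lemma fE_key {a b c : ℝ} (ha : a < 0) (hb : 0 < b) (hc : 0 < c) (s : ℝ) :
    fE a b c s - fE a b c (splus a b c)
      = (1/9)*(s-splus a b c)^2*(c*s^2 + (2/3)*(3*c*(splus a b c)-b)*s
          + (1/3)*(splus a b c)*(3*c*(splus a b c)-b)) := by
  have hq := splus_quad ha hb hc
  unfold fE
  linear_combination ((s^2 - (splus a b c)^2)/9) * hq

lemma fE_ge {a b c : ℝ} (ha : a < 0) (hb : 0 < b) (hc : 0 < c) (s : ℝ) (hs : 0 ≤ s) :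
    fE a b c (splus a b c) ≤ fE a b c s := by
  have key := fE_key ha hb hc s
  have hSpos := splus_pos ha hb hc
  have h3 := threecS ha hb hc
  set S := splus a b c
  have hpos : 0 ≤ c*s^2 + (2/3)*(3*c*S-b)*s + (1/3)*S*(3*c*S-b) := by
    have h4 : 0 < 3*c*S - b := by linarith
    nlinarith [sq_nonneg s, mul_nonneg hs h4.le]
  nlinarith [mul_nonneg (sq_nonneg (s - S)) hpos]

lemma fE_eq {a b c : ℝ} (ha : a < 0) (hb : 0 < b) (hc : 0 < c) (s : ℝ) (hs : 0 ≤ s)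
    (h : fE a b c s = fE a b c (splus a b c)) : s = splus a b c := by
  have key := fE_key ha hb hc s
  have hSpos := splus_pos ha hb hc
  have h3 := threecS ha hb hc
  set S := splus a b c
  have hpos : 0 < c*s^2 + (2/3)*(3*c*S-b)*s + (1/3)*S*(3*c*S-b) := by
    have h4 : 0 < 3*c*S - b := by linarith
    nlinarith [sq_nonneg s, mul_nonneg hs h4.le]
  have hz : (s - S)^2 = 0 := by
    by_contra hne
    have h2 : 0 < (s-S)^2 := lt_of_le_of_ne (sq_nonneg _) (Ne.symm hne)
    nlinarith
  have := sq_eq_zero_iff.mp hz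
  linarith

lemma q_le {x y z q s : ℝ} (hsum : x+y+z=0) (hq : q = x^3+y^3+z^3)
    (hs : 0 ≤ s) (hp : x^2+y^2+z^2 = 2*s^2/3) : q ≤ 2*s^3/9 := by
  subst hq
  have iden : (x^2+y^2+z^2)^3/6 - (x^3+y^3+z^3)^2 = ((x-y)*(y-z)*(z-x))^2/3 := by
    have hz : z = -x-y := by linarith
    subst hz; ring
  have hq2 : (x^3+y^3+z^3)^2 ≤ (2*s^3/9)^2 := by
    have h1 : (x^3+y^3+z^3)^2 ≤ (x^2+y^2+z^2)^3/6 := by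
      nlinarith [sq_nonneg ((x-y)*(y-z)*(z-x)), iden]
    calc (x^3+y^3+z^3)^2 ≤ (x^2+y^2+z^2)^3/6 := h1
    _ = (2*s^3/9)^2 := by rw [hp]; ring
  have hM : 0 ≤ 2*s^3/9 := by positivity
  nlinarith [hq2, hM]

lemma scalar_ge {a b c : ℝ} (ha : a < 0) (hb : 0 < b) (hc : 0 < c)
    (x y z : ℝ) (hsum : x+y+z=0) :
    fE a b c (splus a b c) ≤
      a/2*(x^2+y^2+z^2) - b/3*(x^3+y^3+z^3) + c/4*(x^2+y^2+z^2)^2 := by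
  set p := x^2+y^2+z^2 with hpdef
  have hp0 : 0 ≤ p := by positivity
  set s := Real.sqrt (3*p/2) with hsdef
  have hs0 : 0 ≤ s := Real.sqrt_nonneg _
  have hs2 : s^2 = 3*p/2 := Real.sq_sqrt (by linarith)
  have hp : p = 2*s^2/3 := by linarith
  have hqle : x^3+y^3+z^3 ≤ 2*s^3/9 := q_le hsum rfl hs0 (by rw [← hpdef]; exact hp)
  have h1 : fE a b c s ≤ a/2*p - b/3*(x^3+y^3+z^3) + c/4*p^2 := by
    have : fE a b c s = a/2*p - b/3*(2*s^3/9) + c/4*p^2 := by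
      rw [hp]; unfold fE; ring
    rw [this]
    have := mul_le_mul_of_nonneg_left hqle (by positivity : (0:ℝ) ≤ b/3)
    linarith
  have h2 := fE_ge ha hb hc s hs0
  linarith

lemma pair_eq {S u w : ℝ} (hS : 0 < S) (hsum : u+u+w=0) (hp : u^2+u^2+w^2 = 2*S^2/3)
    (hq : u^3+u^3+w^3 = 2*S^3/9) : u = -S/3 ∧ w = 2*S/3 := by
  have hw : w = -2*u := by linarith
  subst hw
  have hu2 : u^2 = S^2/9 := by nlinarith
  have hu3 : u^3 = -S^3/27 := by nlinarith
  have hfac : (u - S/3)*(u + S/3) = 0 := by nlinarith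
  rcases mul_eq_zero.mp hfac with h | h
  · exfalso
    have : u = S/3 := by linarith
    rw [this] at hu3
    nlinarith [pow_pos hS 3]
  · constructor <;> [linarith; linarith]

set_option maxHeartbeats 1000000 in
lemma scalar_eq {a b c : ℝ} (ha : a < 0) (hb : 0 < b) (hc : 0 < c)
    (x y z : ℝ) (hsum : x+y+z=0)
    (h : a/2*(x^2+y^2+z^2) - b/3*(x^3+y^3+z^3) + c/4*(x^2+y^2+z^2)^2
        = fE a b c (splus a b c)) :
    (x = -(splus a b c)/3 ∧ y = -(splus a b c)/3 ∧ z = 2*(splus a b c)/3) ∨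
    (y = -(splus a b c)/3 ∧ z = -(splus a b c)/3 ∧ x = 2*(splus a b c)/3) ∨
    (z = -(splus a b c)/3 ∧ x = -(splus a b c)/3 ∧ y = 2*(splus a b c)/3) := by
  set S := splus a b c with hSdef
  have hS : 0 < S := splus_pos ha hb hc
  set p := x^2+y^2+z^2 with hpdef
  have hp0 : 0 ≤ p := by positivity
  set s := Real.sqrt (3*p/2) with hsdef
  have hs0 : 0 ≤ s := Real.sqrt_nonneg _
  have hs2 : s^2 = 3*p/2 := Real.sq_sqrt (by linarith)
  have hp : p = 2*s^2/3 := by linarith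
  have hqle : x^3+y^3+z^3 ≤ 2*s^3/9 := q_le hsum rfl hs0 (by rw [← hpdef]; exact hp)
  have h1 : fE a b c s ≤ a/2*p - b/3*(x^3+y^3+z^3) + c/4*p^2 := by
    have heq : fE a b c s = a/2*p - b/3*(2*s^3/9) + c/4*p^2 := by
      rw [hp]; unfold fE; ring
    rw [heq]
    have := mul_le_mul_of_nonneg_left hqle (by positivity : (0:ℝ) ≤ b/3)
    linarith
  have h2 := fE_ge ha hb hc s hs0
  have hfseq : fE a b c s = fE a b c S := le_antisymm (by linarith) h2
  have hsS : s = S := fE_eq ha hb hc s hs0 hfseq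
  have hqeq : x^3+y^3+z^3 = 2*S^3/9 := by
    have heq : fE a b c s = a/2*p - b/3*(2*s^3/9) + c/4*p^2 := by
      rw [hp]; unfold fE; ring
    rw [hfseq, ← h] at heq
    have hb3 : (0:ℝ) < b/3 := by positivity
    rw [hsS] at heq
    have h5 : b/3*(x^3+y^3+z^3) = b/3*(2*S^3/9) := by linarith
    have := mul_left_cancel₀ (ne_of_gt hb3) h5
    linarith
  have hpeq : x^2+y^2+z^2 = 2*S^2/3 := by rw [← hpdef, hp, hsS]
  have iden : (x^2+y^2+z^2)^3/6 - (x^3+y^3+z^3)^2 = ((x-y)*(y-z)*(z-x))^2/3 := by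
    have hz : z = -x-y := by linarith
    subst hz; ring
  have hzero : ((x-y)*(y-z)*(z-x))^2 = 0 := by
    rw [hpeq, hqeq] at iden
    linarith [iden]
  have hfac : (x-y)*(y-z)*(z-x) = 0 := by
    exact sq_eq_zero_iff.mp hzero
  rcases mul_eq_zero.mp hfac with h' | h'
  · rcases mul_eq_zero.mp h' with h'' | h''
    · have hxy : y = x := by linarith
      rw [hxy] at hpeq hqeq
      have hres := pair_eq hS (show x+x+z=0 by linarith) (show x^2+x^2+z^2 = 2*S^2/3 by linarith)
        (show x^3+x^3+z^3 = 2*S^3/9 by linarith)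
      exact Or.inl ⟨hres.1, by rw [hxy]; exact hres.1, hres.2⟩
    · have hyz : z = y := by linarith
      rw [hyz] at hpeq hqeq
      have hres := pair_eq hS (show y+y+x=0 by linarith) (show y^2+y^2+x^2 = 2*S^2/3 by linarith)
        (show y^3+y^3+x^3 = 2*S^3/9 by linarith)
      exact Or.inr (Or.inl ⟨hres.1, by rw [hyz]; exact hres.1, hres.2⟩)
  · have hzx : x = z := by linarith
    rw [hzx] at hpeq hqeq
    have hres := pair_eq hS (show z+z+y=0 by linarith) (show z^2+z^2+y^2 = 2*S^2/3 by linarith)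
      (show z^3+z^3+y^3 = 2*S^3/9 by linarith)
    exact Or.inr (Or.inr ⟨hres.1, by rw [hzx]; exact hres.1, hres.2⟩)

/-! ### Auxiliary matrix lemmas -/

open Matrix

lemma vmv_mul_vmv (u v w x : Fin 3 → ℝ) :
    vecMulVec u v * vecMulVec w x = (v ⬝ᵥ w) • vecMulVec u x := by
  ext i j
  simp only [Matrix.mul_apply, vecMulVec_apply, Matrix.smul_apply, dotProduct, smul_eq_mul,
    Finset.sum_mul]
  apply Finset.sum_congr rfl
  intro k _
  ring

lemma trace_vmv (u v : Fin 3 → ℝ) : (vecMulVec u v).trace = u ⬝ᵥ v := by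
  simp [Matrix.trace, Matrix.diag, vecMulVec_apply, dotProduct]

lemma transpose_vmv (u v : Fin 3 → ℝ) : (vecMulVec u v)ᵀ = vecMulVec v u := by
  ext i j; simp [vecMulVec_apply, Matrix.transpose_apply]; ring

lemma dot_self_eq_one {n : Fin 3 → ℝ} (hn : ∑ i, (n i)^2 = 1) : n ⬝ᵥ n = 1 := by
  rw [dotProduct]; simpa [sq] using hn

lemma uniQ_mem (s : ℝ) (n : Fin 3 → ℝ) (hn : ∑ i, (n i)^2 = 1) : uniQ s n ∈ QSet := by
  constructor
  · show (uniQ s n)ᵀ = uniQ s n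
    unfold uniQ
    rw [Matrix.transpose_smul, Matrix.transpose_sub, transpose_vmv, Matrix.transpose_smul,
      Matrix.transpose_one]
  · unfold uniQ
    rw [Matrix.trace_smul, Matrix.trace_sub, Matrix.trace_smul, Matrix.trace_one, trace_vmv,
      dot_self_eq_one hn]
    simp

lemma combo_traces (P₀ P₁ P₂ : Mat3)
    (h00 : P₀*P₀ = P₀) (h11 : P₁*P₁ = P₁) (h22 : P₂*P₂ = P₂)
    (h01 : P₀*P₁ = 0) (h10 : P₁*P₀ = 0) (h02 : P₀*P₂ = 0) (h20 : P₂*P₀ = 0)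
    (h12 : P₁*P₂ = 0) (h21 : P₂*P₁ = 0)
    (t0 : P₀.trace = 1) (t1 : P₁.trace = 1) (t2 : P₂.trace = 1)
    (α β γ δ : ℝ) :
    let M := α•P₀ + β•P₁ + γ•P₂ + δ•(1:Mat3)
    (M*M).trace = α^2+β^2+γ^2+3*δ^2+2*δ*(α+β+γ) ∧
    (M*M*M).trace = α^3+β^3+γ^3+3*δ^3+3*δ*(α^2+β^2+γ^2)+3*δ^2*(α+β+γ) := by
  intro M
  have hM2 : M*M = (α^2+2*δ*α)•P₀ + (β^2+2*δ*β)•P₁ + (γ^2+2*δ*γ)•P₂ + (δ^2)•(1:Mat3) := by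
    show (α•P₀ + β•P₁ + γ•P₂ + δ•(1:Mat3)) * (α•P₀ + β•P₁ + γ•P₂ + δ•(1:Mat3)) = _
    simp only [add_mul, mul_add, Matrix.smul_mul, Matrix.mul_smul, h00, h11, h22, h01, h10,
      h02, h20, h12, h21, smul_zero, mul_one, one_mul, smul_smul]
    module
  have hM3 : M*M*M = (α^3+3*δ*α^2+3*δ^2*α)•P₀ + (β^3+3*δ*β^2+3*δ^2*β)•P₁
      + (γ^3+3*δ*γ^2+3*δ^2*γ)•P₂ + (δ^3)•(1:Mat3) := by
    rw [hM2]
    show _ * (α•P₀ + β•P₁ + γ•P₂ + δ•(1:Mat3)) = _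
    simp only [add_mul, mul_add, Matrix.smul_mul, Matrix.mul_smul, h00, h11, h22, h01, h10,
      h02, h20, h12, h21, smul_zero, mul_one, one_mul, smul_smul]
    module
  have htone : (1:Mat3).trace = 3 := by simp [Matrix.trace_one]
  constructor
  · rw [hM2]
    simp only [Matrix.trace_add, Matrix.trace_smul, t0, t1, t2, htone, smul_eq_mul]
    ring
  · rw [hM3]
    simp only [Matrix.trace_add, Matrix.trace_smul, t0, t1, t2, htone, smul_eq_mul]
    ring

lemma combo1_traces (P : Mat3) (hP : P*P = P) (tP : P.trace = 1) (α δ : ℝ) :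
    ((α•P + δ•(1:Mat3))*(α•P + δ•(1:Mat3))).trace = α^2+2*δ*α+3*δ^2 ∧
    ((α•P + δ•(1:Mat3))*(α•P + δ•(1:Mat3))*(α•P + δ•(1:Mat3))).trace
      = α^3+3*δ*α^2+3*δ^2*α+3*δ^3 := by
  have hM2 : (α•P + δ•(1:Mat3))*(α•P + δ•(1:Mat3)) = (α^2+2*δ*α)•P + (δ^2)•(1:Mat3) := by
    simp only [add_mul, mul_add, Matrix.smul_mul, Matrix.mul_smul, hP, mul_one, one_mul,
      smul_smul]
    module
  have hM3 : (α•P + δ•(1:Mat3))*(α•P + δ•(1:Mat3))*(α•P + δ•(1:Mat3))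
      = (α^3+3*δ*α^2+3*δ^2*α)•P + (δ^3)•(1:Mat3) := by
    rw [hM2]
    simp only [add_mul, mul_add, Matrix.smul_mul, Matrix.mul_smul, hP, mul_one, one_mul,
      smul_smul]
    module
  have htone : (1:Mat3).trace = 3 := by simp [Matrix.trace_one]
  constructor
  · rw [hM2]; simp only [Matrix.trace_add, Matrix.trace_smul, tP, htone, smul_eq_mul]; ring
  · rw [hM3]; simp only [Matrix.trace_add, Matrix.trace_smul, tP, htone, smul_eq_mul]; ring

lemma uniQ_eq_combo (s : ℝ) (n : Fin 3 → ℝ) :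
    uniQ s n = s•(vecMulVec n n) + (-(s/3))•(1:Mat3) := by
  unfold uniQ; module

lemma uniQ_traces (s : ℝ) (n : Fin 3 → ℝ) (hn : ∑ i, (n i)^2 = 1) :
    ((uniQ s n)*(uniQ s n)).trace = 2*s^2/3 ∧
    ((uniQ s n)*(uniQ s n)*(uniQ s n)).trace = 2*s^3/9 := by
  have hP : vecMulVec n n * vecMulVec n n = vecMulVec n n := by
    rw [vmv_mul_vmv, dot_self_eq_one hn, one_smul]
  have tP : (vecMulVec n n).trace = 1 := by rw [trace_vmv, dot_self_eq_one hn]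
  have h := combo1_traces (vecMulVec n n) hP tP s (-(s/3))
  rw [uniQ_eq_combo]
  refine ⟨?_, ?_⟩
  · rw [h.1]; ring
  · rw [h.2]; ring

lemma Fb_uniQ (a b c s : ℝ) (n : Fin 3 → ℝ) (hn : ∑ i, (n i)^2 = 1) :
    Fb a b c (uniQ s n) = fE a b c s := by
  have h := uniQ_traces s n hn
  unfold Fb fE
  rw [h.1, h.2]; ring

lemma conj_mul_conj (U : Mat3) (hU : star U * U = 1) (A B : Mat3) :
    (U*A*star U) * (U*B*star U) = U*(A*B)*star U := by
  calc (U*A*star U) * (U*B*star U) = U*(A*((star U*U)*(B*star U))) := by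
        simp only [mul_assoc]
  _ = U*(A*B)*star U := by rw [hU, one_mul, mul_assoc, mul_assoc]

lemma trace_conj (U : Mat3) (hU : star U * U = 1) (A : Mat3) :
    (U*A*star U).trace = A.trace := by
  rw [Matrix.trace_mul_cycle, hU, one_mul]

lemma spectral_traces (Q : Mat3) (hQ : Q.IsHermitian) :
    Q.trace = ∑ i, hQ.eigenvalues i ∧
    (Q*Q).trace = ∑ i, (hQ.eigenvalues i)^2 ∧
    (Q*Q*Q).trace = ∑ i, (hQ.eigenvalues i)^3 := by
  set U : Mat3 := (hQ.eigenvectorUnitary : Mat3) with hUdef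
  have hU : star U * U = 1 := Matrix.UnitaryGroup.star_mul_self hQ.eigenvectorUnitary
  set μ := hQ.eigenvalues with hμdef
  have hspec : Q = U * diagonal μ * star U := by
    have h := hQ.spectral_theorem
    simpa using h
  have h2 : Q*Q = U * (diagonal μ * diagonal μ) * star U := by
    rw [hspec, conj_mul_conj U hU]
  have h3 : Q*Q*Q = U * (diagonal μ * diagonal μ * diagonal μ) * star U := by
    rw [h2, hspec, conj_mul_conj U hU]
  refine ⟨?_, ?_, ?_⟩
  · rw [hspec, trace_conj U hU, Matrix.trace_diagonal]
  · rw [h2, trace_conj U hU, Matrix.diagonal_mul_diagonal, Matrix.trace_diagonal]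
    exact Finset.sum_congr rfl (fun i _ => by ring)
  · rw [h3, trace_conj U hU, Matrix.diagonal_mul_diagonal, Matrix.diagonal_mul_diagonal,
      Matrix.trace_diagonal]
    exact Finset.sum_congr rfl (fun i _ => by ring)

lemma reconstruct (Q : Mat3) (hQ : Q.IsHermitian) (S : ℝ) (k : Fin 3)
    (hk : hQ.eigenvalues k = 2*S/3) (ho : ∀ j, j ≠ k → hQ.eigenvalues j = -S/3) :
    ∃ n' : Fin 3 → ℝ, (∑ i, (n' i)^2 = 1) ∧ Q = uniQ S n' := by
  set U : Mat3 := (hQ.eigenvectorUnitary : Mat3) with hUdef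
  have hU1 : star U * U = 1 := Matrix.UnitaryGroup.star_mul_self hQ.eigenvectorUnitary
  have hU2 : U * star U = 1 := mul_eq_one_comm.mp hU1
  set μ := hQ.eigenvalues with hμdef
  have hspec : Q = U * diagonal μ * star U := by
    have h := hQ.spectral_theorem
    simpa using h
  set e : Fin 3 → ℝ := fun j => if j = k then 1 else 0 with hedef
  refine ⟨U *ᵥ e, ?_, ?_⟩
  · have hcol : ∀ i, (U *ᵥ e) i = U i k := by
      intro i; simp [Matrix.mulVec, dotProduct, hedef]
    have h1 : (star U * U) k k = (1 : Mat3) k k := by rw [hU1]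
    simp only [Matrix.mul_apply, Matrix.star_apply, star_trivial, Matrix.one_apply_eq] at h1
    calc ∑ i, ((U *ᵥ e) i)^2 = ∑ i, U i k * U i k := by
          apply Finset.sum_congr rfl; intro i _; rw [hcol i]; ring
    _ = 1 := h1
  · have hdiag : diagonal μ = S • (vecMulVec e e - (1/3:ℝ)•(1:Mat3)) := by
      ext i j
      by_cases hij : i = j
      · subst hij
        by_cases hik : i = k
        · subst hik
          simp [Matrix.diagonal_apply_eq, vecMulVec_apply, hedef, hk]
          ring
        · simp [Matrix.diagonal_apply_eq, vecMulVec_apply, hedef, hik, ho i hik]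
          ring
      · have h0 : e i * e j = 0 := by
          simp only [hedef]
          by_cases hik : i = k
          · by_cases hjk : j = k
            · exact absurd (hik.trans hjk.symm) hij
            · simp [hjk]
          · simp [hik]
        simp [Matrix.diagonal_apply_ne _ hij, Matrix.smul_apply, Matrix.sub_apply,
          vecMulVec_apply, Matrix.one_apply_ne hij, h0]
    have hconj : U * vecMulVec e e * star U = vecMulVec (U *ᵥ e) (U *ᵥ e) := by
      ext i j
      simp [Matrix.mul_apply, vecMulVec_apply, Matrix.mulVec, dotProduct, Matrix.star_apply,
        hedef, mul_ite, ite_mul, Finset.sum_ite_eq', Finset.mem_univ, Finset.sum_mul,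
        Finset.mul_sum]
    rw [hspec, hdiag, Matrix.mul_smul, Matrix.smul_mul]
    unfold uniQ
    congr 1
    rw [Matrix.mul_sub, Matrix.sub_mul, Matrix.mul_smul, Matrix.smul_mul, mul_one, hU2, hconj]

lemma extend_to_frame (n : Fin 3 → ℝ) (hn : ∑ i, (n i)^2 = 1) :
    ∃ v w : Fin 3 → ℝ, (∑ i, (v i)^2 = 1) ∧ (∑ i, (w i)^2 = 1) ∧
      (∑ i, n i * v i = 0) ∧ (∑ i, n i * w i = 0) ∧ (∑ i, v i * w i = 0) := by
  set E := EuclideanSpace ℝ (Fin 3)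
  let N : E := WithLp.toLp 2 n
  have hinner : ∀ x y : E, (inner ℝ x y : ℝ) = ∑ i, x i * y i := by
    intro x y
    rw [PiLp.inner_apply]
    simp [RCLike.inner_apply, conj_trivial, mul_comm]
  have hNN : (inner ℝ N N : ℝ) = 1 := by rw [hinner]; simpa [sq] using hn
  have hcard : Module.finrank ℝ E = Fintype.card (Fin 3) := by
    simp only [E, finrank_euclideanSpace, Fintype.card_fin]
  have horth : Orthonormal ℝ (Set.restrict {(0 : Fin 3)} (fun _ : Fin 3 => N)) := by
    rw [orthonormal_iff_ite]
    intro i j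
    have hij : i = j := Subtype.ext (by
      have h1 := i.2; have h2 := j.2
      simp only [Set.mem_singleton_iff] at h1 h2
      rw [h1, h2])
    subst hij
    simp [hNN]
    exact Or.inl (show ‖N‖ = 1 by rw [norm_eq_sqrt_real_inner, hNN, Real.sqrt_one])
  obtain ⟨b, hb⟩ := horth.exists_orthonormalBasis_extension_of_card_eq hcard
  have hb0 : b 0 = N := hb 0 rfl
  have hbo := b.orthonormal
  rw [orthonormal_iff_ite] at hbo
  refine ⟨fun i => b 1 i, fun i => b 2 i, ?_, ?_, ?_, ?_, ?_⟩
  · have := hbo 1 1; rw [hinner] at this; simp at this; simpa [sq] using this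
  · have := hbo 2 2; rw [hinner] at this; simp at this; simpa [sq] using this
  · have := hbo 0 1; rw [hinner, hb0] at this; simpa using this
  · have := hbo 0 2; rw [hinner, hb0] at this; simpa using this
  · have := hbo 1 2; rw [hinner] at this; simpa using this


lemma not_min_zero {a b c : ℝ} (ha : a < 0) (hb : 0 < b) (hc : 0 < c) :
    ¬ IsLocalMinOn (Fb a b c) QSet 0 := by
  intro h
  set e0 : Fin 3 → ℝ := ![1,0,0] with he0
  have hn : ∑ i, (e0 i)^2 = 1 := by simp [he0, Fin.sum_univ_three]
  have hcont : Filter.Tendsto (fun t : ℝ => uniQ t e0)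
      (nhdsWithin 0 (Set.Ioi 0)) (nhdsWithin (0:Mat3) QSet) := by
    rw [tendsto_nhdsWithin_iff]
    constructor
    · have hC : Continuous fun t : ℝ =>
          t • (Matrix.vecMulVec e0 e0 - (1/3:ℝ)•(1:Mat3)) := continuous_id.smul continuous_const
      have h2 := hC.tendsto 0
      rw [zero_smul] at h2
      exact (h2.mono_left nhdsWithin_le_nhds)
    · exact Filter.Eventually.of_forall (fun t => uniQ_mem t e0 hn)
  have hev := hcont.eventually h
  have hF0 : Fb a b c (0:Mat3) = 0 := by simp [Fb]
  have hg : Filter.Tendsto (fun t:ℝ => a/3 - 2*b*t/27 + c*t^2/9) (nhds 0) (nhds (a/3)) := by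
    have hC : Continuous fun t:ℝ => a/3 - 2*b*t/27 + c*t^2/9 := by fun_prop
    have := hC.tendsto 0
    simpa using this
  have hg0 : ∀ᶠ t in nhds (0:ℝ), (a/3 - 2*b*t/27 + c*t^2/9) < 0 :=
    hg.eventually_lt_const (by linarith : a/3 < 0)
  have hneg : ∀ᶠ t in nhdsWithin (0:ℝ) (Set.Ioi 0), Fb a b c (uniQ t e0) < 0 := by
    filter_upwards [hg0.filter_mono nhdsWithin_le_nhds, self_mem_nhdsWithin] with t hgt hmem
    have ht : 0 < t := hmem
    have hFb : Fb a b c (uniQ t e0) = t^2*(a/3 - 2*b*t/27 + c*t^2/9) := by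
      rw [Fb_uniQ a b c t e0 hn]; unfold fE; ring
    rw [hFb]
    exact mul_neg_of_pos_of_neg (by positivity) hgt
  obtain ⟨t, h1, h2⟩ := (hev.and hneg).exists
  rw [hF0] at h1
  linarith

lemma not_min_sminus {a b c : ℝ} (ha : a < 0) (hb : 0 < b) (hc : 0 < c)
    (n : Fin 3 → ℝ) (hn : ∑ i, (n i)^2 = 1) :
    ¬ IsLocalMinOn (Fb a b c) QSet (uniQ (sminus a b c) n) := by
  intro h
  obtain ⟨v, w, hv, hw, hnv, hnw, hvw⟩ := extend_to_frame n hn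
  set sm := sminus a b c with hsm
  have hsmneg : sm < 0 := sminus_neg ha hb hc
  have hrel := sminus_quad ha hb hc
  set P₀ := Matrix.vecMulVec n n with hP0
  set P₁ := Matrix.vecMulVec v v with hP1
  set P₂ := Matrix.vecMulVec w w with hP2
  set B : Mat3 := P₁ - P₂ with hB
  set path : ℝ → Mat3 := fun t => uniQ sm n + t • B with hpath
  -- dot product facts
  have dnn : n ⬝ᵥ n = 1 := dot_self_eq_one hn
  have dvv : v ⬝ᵥ v = 1 := dot_self_eq_one hv
  have dww : w ⬝ᵥ w = 1 := dot_self_eq_one hw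
  have dnv : n ⬝ᵥ v = 0 := by rw [dotProduct]; simpa using hnv
  have dvn : v ⬝ᵥ n = 0 := by rw [dotProduct]; simpa [mul_comm] using hnv
  have dnw : n ⬝ᵥ w = 0 := by rw [dotProduct]; simpa using hnw
  have dwn : w ⬝ᵥ n = 0 := by rw [dotProduct]; simpa [mul_comm] using hnw
  have dvw : v ⬝ᵥ w = 0 := by rw [dotProduct]; simpa using hvw
  have dwv : w ⬝ᵥ v = 0 := by rw [dotProduct]; simpa [mul_comm] using hvw
  have h00 : P₀*P₀ = P₀ := by rw [hP0, vmv_mul_vmv, dnn, one_smul]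
  have h11 : P₁*P₁ = P₁ := by rw [hP1, vmv_mul_vmv, dvv, one_smul]
  have h22 : P₂*P₂ = P₂ := by rw [hP2, vmv_mul_vmv, dww, one_smul]
  have h01 : P₀*P₁ = 0 := by rw [hP0, hP1, vmv_mul_vmv, dnv, zero_smul]
  have h10 : P₁*P₀ = 0 := by rw [hP0, hP1, vmv_mul_vmv, dvn, zero_smul]
  have h02 : P₀*P₂ = 0 := by rw [hP0, hP2, vmv_mul_vmv, dnw, zero_smul]
  have h20 : P₂*P₀ = 0 := by rw [hP0, hP2, vmv_mul_vmv, dwn, zero_smul]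
  have h12 : P₁*P₂ = 0 := by rw [hP1, hP2, vmv_mul_vmv, dvw, zero_smul]
  have h21 : P₂*P₁ = 0 := by rw [hP1, hP2, vmv_mul_vmv, dwv, zero_smul]
  have t0 : P₀.trace = 1 := by rw [hP0, trace_vmv, dnn]
  have t1 : P₁.trace = 1 := by rw [hP1, trace_vmv, dvv]
  have t2 : P₂.trace = 1 := by rw [hP2, trace_vmv, dww]
  -- path as combo
  have hcombo : ∀ t : ℝ, path t = sm•P₀ + t•P₁ + (-t)•P₂ + (-(sm/3))•(1:Mat3) := by
    intro t
    rw [hpath]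
    show uniQ sm n + t • B = _
    rw [hB, uniQ_eq_combo]
    module
  -- energy along the path
  have hFt : ∀ t : ℝ, Fb a b c (path t) = fE a b c sm + b*sm*t^2 + c*t^4 := by
    intro t
    have hct := combo_traces P₀ P₁ P₂ h00 h11 h22 h01 h10 h02 h20 h12 h21 t0 t1 t2
      sm t (-t) (-(sm/3))
    rw [hcombo t]
    unfold Fb
    rw [hct.1, hct.2]
    unfold fE
    linear_combination (t^2/3) * hrel
  -- membership
  have hmem : ∀ t : ℝ, path t ∈ QSet := by
    intro t
    have huni := uniQ_mem sm n hn
    constructor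
    · show (path t)ᵀ = path t
      rw [hpath]
      show (uniQ sm n + t • B)ᵀ = uniQ sm n + t • B
      rw [Matrix.transpose_add, Matrix.transpose_smul, hB, Matrix.transpose_sub, hP1, hP2,
        transpose_vmv, transpose_vmv, huni.1]
    · show (path t).trace = 0
      rw [hpath]
      show (uniQ sm n + t • B).trace = 0
      rw [Matrix.trace_add, Matrix.trace_smul, hB, Matrix.trace_sub, t1, t2, huni.2]
      simp
  -- tendsto
  have hcont : Filter.Tendsto path (nhdsWithin 0 (Set.Ioi 0))
      (nhdsWithin (uniQ sm n) QSet) := by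
    rw [tendsto_nhdsWithin_iff]
    constructor
    · have hC : Continuous path := by
        rw [hpath]; exact continuous_const.add (continuous_id.smul continuous_const)
      have h2 := hC.tendsto 0
      have hp0 : path 0 = uniQ sm n := by rw [hpath]; simp
      rw [hp0] at h2
      exact (h2.mono_left nhdsWithin_le_nhds)
    · exact Filter.Eventually.of_forall (fun t => hmem t)
  have hev := hcont.eventually h
  have hg : Filter.Tendsto (fun t:ℝ => b*sm + c*t^2) (nhds 0) (nhds (b*sm)) := by
    have hC : Continuous fun t:ℝ => b*sm + c*t^2 := by fun_prop
    have := hC.tendsto 0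
    simpa using this
  have hg0 : ∀ᶠ t in nhds (0:ℝ), (b*sm + c*t^2) < 0 :=
    hg.eventually_lt_const (by nlinarith : b*sm < 0)
  have hneg : ∀ᶠ t in nhdsWithin (0:ℝ) (Set.Ioi 0),
      Fb a b c (path t) < Fb a b c (uniQ sm n) := by
    filter_upwards [hg0.filter_mono nhdsWithin_le_nhds, self_mem_nhdsWithin] with t hgt hmem'
    have ht : 0 < t := hmem'
    rw [hFt t, Fb_uniQ a b c sm n hn]
    nlinarith [mul_neg_of_pos_of_neg (by positivity : (0:ℝ) < t^2) hgt]
  obtain ⟨t, h1, h2⟩ := (hev.and hneg).exists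
  linarith


lemma Fb_eigen {a b c : ℝ} (Q : Mat3) (hQ : Q.IsHermitian) :
    Fb a b c Q = a/2*((hQ.eigenvalues 0)^2+(hQ.eigenvalues 1)^2+(hQ.eigenvalues 2)^2)
      - b/3*((hQ.eigenvalues 0)^3+(hQ.eigenvalues 1)^3+(hQ.eigenvalues 2)^3)
      + c/4*((hQ.eigenvalues 0)^2+(hQ.eigenvalues 1)^2+(hQ.eigenvalues 2)^2)^2 := by
  obtain ⟨st1, st2, st3⟩ := spectral_traces Q hQ
  unfold Fb
  rw [st2, st3, Fin.sum_univ_three, Fin.sum_univ_three]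

/-- For `a < 0`: (i) `F_b` is minimized over 𝒬 exactly at the uniaxial tensors
`s₊ (n nᵀ − I/3)` (a value independent of the unit vector `n`); (ii) `Q = 0` is not a
local minimizer of `F_b` on 𝒬; (iii) no `s₋ (n nᵀ − I/3)` is a local minimizer of `F_b`
on 𝒬. -/
theorem stmt8 (a b c : ℝ) (ha : a < 0) (hb : 0 < b) (hc : 0 < c) :
    (∀ n : Fin 3 → ℝ, (∑ i, (n i) ^ 2 = 1) →
      (∀ n' : Fin 3 → ℝ, (∑ i, (n' i) ^ 2 = 1) →
        Fb a b c (uniQ (splus a b c) n) = Fb a b c (uniQ (splus a b c) n')) ∧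
      (∀ Q ∈ QSet, Fb a b c (uniQ (splus a b c) n) ≤ Fb a b c Q) ∧
      (∀ Q ∈ QSet, Fb a b c Q = Fb a b c (uniQ (splus a b c) n) ↔
        ∃ n' : Fin 3 → ℝ, (∑ i, (n' i) ^ 2 = 1) ∧ Q = uniQ (splus a b c) n')) ∧
    (¬ IsLocalMinOn (Fb a b c) QSet 0) ∧
    (∀ n : Fin 3 → ℝ, (∑ i, (n i) ^ 2 = 1) →
      ¬ IsLocalMinOn (Fb a b c) QSet (uniQ (sminus a b c) n)) := by
  refine ⟨?_, not_min_zero ha hb hc, fun n hn => not_min_sminus ha hb hc n hn⟩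
  intro n hn
  refine ⟨?_, ?_, ?_⟩
  · intro n' hn'
    rw [Fb_uniQ a b c _ n hn, Fb_uniQ a b c _ n' hn']
  · intro Q hQmem
    have hQ : Q.IsHermitian := hQmem.1
    have hsum : hQ.eigenvalues 0 + hQ.eigenvalues 1 + hQ.eigenvalues 2 = 0 := by
      have h2 := hQmem.2
      rw [(spectral_traces Q hQ).1, Fin.sum_univ_three] at h2
      linarith
    rw [Fb_uniQ a b c _ n hn, Fb_eigen Q hQ]
    exact scalar_ge ha hb hc _ _ _ hsum
  · intro Q hQmem
    constructor
    · intro h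
      have hQ : Q.IsHermitian := hQmem.1
      have hsum : hQ.eigenvalues 0 + hQ.eigenvalues 1 + hQ.eigenvalues 2 = 0 := by
        have h2 := hQmem.2
        rw [(spectral_traces Q hQ).1, Fin.sum_univ_three] at h2
        linarith
      rw [Fb_uniQ a b c _ n hn] at h
      have h' : a/2*((hQ.eigenvalues 0)^2+(hQ.eigenvalues 1)^2+(hQ.eigenvalues 2)^2)
          - b/3*((hQ.eigenvalues 0)^3+(hQ.eigenvalues 1)^3+(hQ.eigenvalues 2)^3)
          + c/4*((hQ.eigenvalues 0)^2+(hQ.eigenvalues 1)^2+(hQ.eigenvalues 2)^2)^2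
          = fE a b c (splus a b c) :=
        (Fb_eigen (a := a) (b := b) (c := c) Q hQ).symm.trans h
      have hdisj := scalar_eq ha hb hc _ _ _ hsum h'
      rcases hdisj with ⟨h0, h1, h2⟩ | ⟨h1, h2, h0⟩ | ⟨h2, h0, h1⟩
      · exact reconstruct Q hQ (splus a b c) 2 h2 (by
          intro j hj
          fin_cases j
          · exact h0
          · exact h1
          · simp at hj)
      · exact reconstruct Q hQ (splus a b c) 0 h0 (by
          intro j hj
          fin_cases j
          · simp at hj
          · exact h1
          · exact h2)
      · exact reconstruct Q hQ (splus a b c) 1 h1 (by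
          intro j hj
          fin_cases j
          · exact h0
          · simp at hj
          · exact h2)
    · rintro ⟨n', hn', rfl⟩
      rw [Fb_uniQ a b c _ n' hn', Fb_uniQ a b c _ n hn]

end
end

section
/- Assume a > b²/(24c). Then Q = 0 is the unique Q ∈ 𝒬 solving the stationarity equation aQ − b(Q² − (tr(Q²)/3) I) + c tr(Q²) Q = 0, and F_b(Q) > 0 = F_b(0) for every nonzero Q ∈ 𝒬; in particular Q = 0 is the strict global minimizer of F_b on 𝒬. -/
open Real

noncomputable section

open Matrix in
lemma aux_trace_pows (Q : Matrix (Fin 3) (Fin 3) ℝ) (hQ : Q.IsHermitian) :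
    Q.trace = ∑ i, hQ.eigenvalues i ∧
    (Q * Q).trace = ∑ i, hQ.eigenvalues i ^ 2 ∧
    (Q * Q * Q).trace = ∑ i, hQ.eigenvalues i ^ 3 := by
  set U : Matrix (Fin 3) (Fin 3) ℝ := (hQ.eigenvectorUnitary : Matrix (Fin 3) (Fin 3) ℝ)
  have hU2 : U * star U = 1 := Unitary.coe_mul_star_self _
  have hD : star U * Q * U = diagonal (RCLike.ofReal ∘ hQ.eigenvalues) :=
    by have := hQ.conjStarAlgAut_star_eigenvectorUnitary; rwa [Unitary.conjStarAlgAut_star_apply] at this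
  set D : Matrix (Fin 3) (Fin 3) ℝ := diagonal (RCLike.ofReal ∘ hQ.eigenvalues) with hDdef
  have h1 : D = star U * Q * U := hD.symm
  have h2 : D * D = star U * (Q * Q) * U := by
    rw [← hD]
    calc (star U * Q * U) * (star U * Q * U)
        = star U * Q * (U * star U) * Q * U := by noncomm_ring
      _ = star U * (Q * Q) * U := by rw [hU2]; noncomm_ring
  have h3 : D * D * D = star U * (Q * Q * Q) * U := by
    rw [← hD]
    calc (star U * Q * U) * (star U * Q * U) * (star U * Q * U)
        = star U * Q * (U * star U) * Q * (U * star U) * Q * U := by noncomm_ring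
      _ = star U * (Q * Q * Q) * U := by rw [hU2]; noncomm_ring
  have t1 : Q.trace = D.trace := by
    rw [h1, Matrix.trace_mul_cycle (star U) Q U, hU2, Matrix.one_mul]
  have t2 : (Q * Q).trace = (D * D).trace := by
    rw [h2, Matrix.trace_mul_cycle (star U) (Q*Q) U, hU2, Matrix.one_mul]
  have t3 : (Q * Q * Q).trace = (D * D * D).trace := by
    rw [h3, Matrix.trace_mul_cycle (star U) (Q*Q*Q) U, hU2, Matrix.one_mul]
  refine ⟨?_, ?_, ?_⟩
  · rw [t1, hDdef, trace_diagonal]; simp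
  · rw [t2, hDdef, diagonal_mul_diagonal, trace_diagonal]
    simp [pow_two]
  · rw [t3, hDdef, diagonal_mul_diagonal, diagonal_mul_diagonal, trace_diagonal]
    simp [pow_succ, pow_two, mul_assoc]

lemma aux_key_ineq (x y z : ℝ) (h : x + y + z = 0) :
    6 * (x^3 + y^3 + z^3)^2 ≤ (x^2 + y^2 + z^2)^3 := by
  have hz : z = -(x + y) := by linarith
  subst hz
  nlinarith [sq_nonneg ((x - y) * (x + 2*y) * (2*x + y)), sq_nonneg (x+y), sq_nonneg (x-y)]

open Matrix in
lemma aux_trace_sq_eq (Q : Matrix (Fin 3) (Fin 3) ℝ) (hs : Q.IsSymm) :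
    (Q * Q).trace = ∑ i, ∑ j, (Q i j)^2 := by
  simp only [Matrix.trace, Matrix.diag, Matrix.mul_apply]
  refine Finset.sum_congr rfl fun i _ => Finset.sum_congr rfl fun j _ => ?_
  rw [hs.apply, pow_two]

open Matrix in
lemma aux_pos_of_ne (Q : Matrix (Fin 3) (Fin 3) ℝ) (hs : Q.IsSymm) (hne : Q ≠ 0) :
    0 < (Q * Q).trace := by
  rw [aux_trace_sq_eq Q hs]
  have hnn : (0:ℝ) ≤ ∑ i, ∑ j, (Q i j)^2 := by positivity
  rcases hnn.lt_or_eq with h | h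
  · exact h
  · exfalso; apply hne; ext i j
    have h1 := (Finset.sum_eq_zero_iff_of_nonneg
      (fun i _ => Finset.sum_nonneg fun j _ => sq_nonneg (Q i j))).mp h.symm i
      (Finset.mem_univ i)
    have h2 := (Finset.sum_eq_zero_iff_of_nonneg
      (fun j _ => sq_nonneg (Q i j))).mp h1 j (Finset.mem_univ j)
    simpa [pow_eq_zero_iff] using h2

open Matrix in
lemma aux_six (Q : Matrix (Fin 3) (Fin 3) ℝ) (hs : Q.IsSymm) (htr : Q.trace = 0) :
    6 * ((Q * Q * Q).trace)^2 ≤ ((Q * Q).trace)^3 := by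
  have hH : Q.IsHermitian := by
    rw [Matrix.IsHermitian, Matrix.conjTranspose_eq_transpose_of_trivial]; exact hs
  obtain ⟨e1, e2, e3⟩ := aux_trace_pows Q hH
  rw [e2, e3]
  rw [e1, Fin.sum_univ_three] at htr
  rw [Fin.sum_univ_three, Fin.sum_univ_three]
  exact aux_key_ineq _ _ _ htr

/-- For `a > b²/(24c)`: `Q = 0` is the only symmetric traceless solution of the
stationarity equation, and `F_b(Q) > 0 = F_b(0)` for every nonzero `Q ∈ 𝒬`; in
particular `Q = 0` is the strict global minimizer of `F_b` on 𝒬. -/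
theorem stmt9 (a b c : ℝ) (hb : 0 < b) (hc : 0 < c) (ha : b ^ 2 / (24 * c) < a) :
    (∀ Q ∈ QSet,
      (a • Q - b • (Q * Q - ((Q * Q).trace / 3) • (1 : Mat3)) + (c * (Q * Q).trace) • Q = 0)
        → Q = 0) ∧
    Fb a b c 0 = 0 ∧
    (∀ Q ∈ QSet, Q ≠ 0 → 0 < Fb a b c Q) := by
  have hb24 : b ^ 2 < 24 * a * c := by
    rw [div_lt_iff₀ (by positivity)] at ha
    nlinarith
  have ha0 : 0 < a := by nlinarith [sq_nonneg b]
  refine ⟨?_, ?_, ?_⟩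
  · rintro Q ⟨hs, htr⟩ hE
    by_contra hne
    have hp : 0 < (Q * Q).trace := aux_pos_of_ne Q hs hne
    set p := (Q * Q).trace with hpdef
    set t := (Q * Q * Q).trace with htdef
    have h6 : 6 * t^2 ≤ p^3 := aux_six Q hs htr
    -- take trace of (equation * Q)
    have hE2 := congrArg (fun M => (M * Q).trace) hE
    simp only [Matrix.zero_mul, Matrix.trace_zero, Matrix.sub_mul, Matrix.add_mul,
      Matrix.smul_mul, Matrix.one_mul, Matrix.trace_sub, Matrix.trace_add,
      Matrix.trace_smul, smul_eq_mul, htr, mul_zero, Matrix.mul_assoc] at hE2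
    -- hE2 : a * p - b * (t - (p/3) * 0) + (c*p) * p = 0, roughly
    have heq : a * p - b * t + c * p^2 = 0 := by
      rw [← Matrix.mul_assoc] at hE2
      nlinarith [hE2]
    have h1 : b * t = a * p + c * p^2 := by linarith
    have h2 : (b * t)^2 = (a * p + c * p^2)^2 := by rw [h1]
    have h4 : b^2 * (6 * t^2) ≤ b^2 * p^3 :=
      mul_le_mul_of_nonneg_left h6 (sq_nonneg b)
    nlinarith [mul_nonneg (sq_nonneg (a - c * p)) (sq_nonneg p),
      mul_lt_mul_of_pos_right hb24 (pow_pos hp 3)]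
  · simp [Fb]
  · rintro Q ⟨hs, htr⟩ hne
    have hp : 0 < (Q * Q).trace := aux_pos_of_ne Q hs hne
    set p := (Q * Q).trace with hpdef
    set t := (Q * Q * Q).trace with htdef
    have h6 : 6 * t^2 ≤ p^3 := aux_six Q hs htr
    rw [Fb]
    by_contra hF
    push_neg at hF
    have hpos : 0 < a/2 * p + c/4 * p^2 := by positivity
    have ht : a/2 * p + c/4 * p^2 ≤ b/3 * t := by linarith
    have hsq : (a/2 * p + c/4 * p^2) * (a/2 * p + c/4 * p^2) ≤ (b/3 * t) * (b/3 * t) :=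
      mul_self_le_mul_self (le_of_lt hpos) ht
    have h4 : b^2 * (6 * t^2) ≤ b^2 * p^3 :=
      mul_le_mul_of_nonneg_left h6 (sq_nonneg b)
    nlinarith [mul_nonneg (mul_nonneg (sq_nonneg (a/2 - c/4 * p)) hp.le) hp.le,
      mul_lt_mul_of_pos_right hb24 (pow_pos hp 3),
      mul_pos (mul_pos (mul_pos ha0 hc) hp) (mul_pos hp hp)]
end
end

section
/- Let L₁, L₂, L₃ ∈ ℝ satisfy L₁ > 0, −L₁ < L₃ < 2L₁ and L₁ + (5/3)L₂ + (1/6)L₃ > 0. Then there exists c₀ > 0 such that for every array Ψ : Fin 3 × Fin 3 × Fin 3 → ℝ satisfying Ψ_{ijk} = Ψ_{jik} for all i,j,k and Σᵢ Ψ_{iik} = 0 for each k, one has L₁ Σ_{i,j,k} Ψ_{ijk}² + L₂ Σᵢ (Σⱼ Ψ_{ijj}) (Σₖ Ψ_{ikk}) + L₃ Σ_{i,j,k} Ψ_{ikj} Ψ_{ijk} ≥ c₀ Σ_{i,j,k} Ψ_{ijk}². (This is the coercivity of the Landau–de Gennes elastic energy density L₁|∇Q|² + L₂ Q_{ij,j}Q_{ik,k}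 + L₃ Q_{ik,j}Q_{ij,k} on gradients Ψ_{ijk} = Q_{ij,k} of symmetric traceless tensor fields.) -/
set_option maxHeartbeats 1000000

open Real

/-- Coercivity of the Landau–de Gennes elastic energy density
`L₁|∇Q|² + L₂ Q_{ij,j}Q_{ik,k} + L₃ Q_{ik,j}Q_{ij,k}` on arrays `Ψ_{ijk} = Q_{ij,k}`
that are symmetric and traceless in `(i,j)`: if `L₁ > 0`, `−L₁ < L₃ < 2L₁` and
`L₁ + (5/3)L₂ + (1/6)L₃ > 0`, then there is `c₀ > 0` with
`L₁ Σ Ψ_{ijk}² + L₂ Σᵢ (Σⱼ Ψ_{ijj})(Σₖ Ψ_{ikk}) + L₃ Σ Ψ_{ikj}Ψ_{ijk} ≥ c₀ Σ Ψ_{ijk}²`. -/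
theorem stmt12 (L₁ L₂ L₃ : ℝ) (h₁ : 0 < L₁) (h₂ : -L₁ < L₃) (h₃ : L₃ < 2 * L₁)
    (h₄ : 0 < L₁ + 5 / 3 * L₂ + 1 / 6 * L₃) :
    ∃ c₀ : ℝ, 0 < c₀ ∧
      ∀ Ψ : Fin 3 → Fin 3 → Fin 3 → ℝ,
        (∀ i j k, Ψ i j k = Ψ j i k) →
        (∀ k, ∑ i, Ψ i i k = 0) →
        c₀ * (∑ i, ∑ j, ∑ k, (Ψ i j k) ^ 2) ≤
          L₁ * (∑ i, ∑ j, ∑ k, (Ψ i j k) ^ 2) +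
          L₂ * (∑ i, (∑ j, Ψ i j j) * (∑ k, Ψ i k k)) +
          L₃ * (∑ i, ∑ j, ∑ k, Ψ i k j * Ψ i j k) := by
  set m : ℝ := min (min (L₁ + L₃) ((2 * L₁ - L₃) / 2)) (L₁ + 5 / 3 * L₂ + 1 / 6 * L₃) with hm
  have hm1 : m ≤ L₁ + L₃ := le_trans (min_le_left _ _) (min_le_left _ _)
  have hm2 : m ≤ (2 * L₁ - L₃) / 2 := le_trans (min_le_left _ _) (min_le_right _ _)
  have hm3 : m ≤ L₁ + 5 / 3 * L₂ + 1 / 6 * L₃ := min_le_right _ _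
  have hmpos : 0 < m := lt_min (lt_min (by linarith) (by linarith)) h₄
  refine ⟨m / 2, by linarith, ?_⟩
  intro Ψ hsym htr
  have hα : 0 ≤ (2 * (L₁ - m / 2) - L₃) / 3 := by linarith
  have hβ : 0 ≤ (L₁ - m / 2 + L₃) / 3 := by linarith
  have hγ : 0 ≤ L₂ + 3 / 5 * (L₁ - m / 2) + L₃ / 10 := by linarith
  have e22 : ∀ k, Ψ 2 2 k = -Ψ 0 0 k - Ψ 1 1 k := by
    intro k; have := htr k; rw [Fin.sum_univ_three] at this; linarith
  have s10 : ∀ k, Ψ 1 0 k = Ψ 0 1 k := fun k => hsym 1 0 k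
  have s20 : ∀ k, Ψ 2 0 k = Ψ 0 2 k := fun k => hsym 2 0 k
  have s21 : ∀ k, Ψ 2 1 k = Ψ 1 2 k := fun k => hsym 2 1 k
  simp only [Fin.sum_univ_three, s10, s20, s21, e22]
  have hE1 : (0:ℝ) ≤ 2 * ((1/2) * Ψ 0 0 0 + Ψ 1 1 0 - (1/2) * Ψ 0 1 1 + (1/2) * Ψ 0 2 2)^2 + 2 * (Ψ 1 2 0 - (1/2) * Ψ 0 2 1 - (1/2) * Ψ 0 1 2)^2 + 2 * (-(1/2) * Ψ 0 1 0 + Ψ 0 0 1 + (1/2) * Ψ 1 1 1 + (1/2) * Ψ 1 2 2)^2 + (3/2) * (Ψ 0 2 1 - Ψ 0 1 2)^2 + (1/2) * (Ψ 0 2 0 - Ψ 1 2 1 - Ψ 0 0 2 + Ψ 1 1 2)^2 := by positivity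
  have hE2 : (0:ℝ) ≤ (16/5) * (Ψ 0 0 0 + (5/16) * Ψ 1 1 0 - (1/4) * Ψ 0 1 1 - (7/8) * Ψ 0 2 2)^2 + (16/5) * (Ψ 0 1 0 + (5/8) * Ψ 0 0 1 - (1/4) * Ψ 1 1 1 - (1/4) * Ψ 1 2 2)^2 + (16/5) * (Ψ 0 2 0 - (1/4) * Ψ 1 2 1 + (7/8) * Ψ 0 0 2 + (1/4) * Ψ 1 1 2)^2 + 3 * ((1/2) * Ψ 0 0 1 + Ψ 1 1 1 - Ψ 1 2 2)^2 + 3 * ((3/4) * Ψ 1 1 0 + Ψ 0 1 1 - (1/2) * Ψ 0 2 2)^2 + 3 * (Ψ 1 2 1 + (1/2) * Ψ 0 0 2 + Ψ 1 1 2)^2 + 2 * (Ψ 1 2 0 + Ψ 0 2 1 + Ψ 0 1 2)^2 := by positivity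
  have hT : (0:ℝ) ≤ (Ψ 0 0 0 + Ψ 0 1 1 + Ψ 0 2 2)^2 + (Ψ 0 1 0 + Ψ 1 1 1 + Ψ 1 2 2)^2 + (Ψ 0 2 0 + Ψ 1 2 1 - Ψ 0 0 2 - Ψ 1 1 2)^2 := by positivity
  linarith [mul_nonneg hα hE1, mul_nonneg hβ hE2, mul_nonneg hγ hT]
end
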